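/- arXiv:math/0305239 — 4 statements merged into one kernel-verified Lean document; each statement's English description precedes it below -/
import Mathlib

section
/- For λ ∈ ℕⁿ, the induced module ind_{D_n}^{M_n} K_λ (induction of the one-dimensional D_n-module of character λ to the monoid M_n) is isomorphic, as a rational M_n-module, to the tensor product of symmetric powers S^λ E := S^{λ_1}E ⊗ ⋯ ⊗ S^{λ_n}E, where E = Kⁿ is the natural module. -/
/-!
STATEMENT 1: For `λ ∈ ℕⁿ` (an `n`-part composition of `r`), the induced module
`ind_{D_n}^{M_n} K_λ` is isomorphic, as a rational (left) `M_n`-module, to the tensor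
product of symmetric powers `S^λ E = S^{λ_1}E ⊗ ⋯ ⊗ S^{λ_n}E`, where `E = Kⁿ`.

We realize `ind_{D_n}^{M_n} K_λ` concretely as the subspace of the coordinate ring
`K[M_n] = MvPolynomial (Fin n × Fin n) K` of functions `f` with `f(t·x) = t^λ f(x)` for
all diagonal `t` (the right weight-`λ` space), with left `M_n`-action `(g·f)(x) = f(xg)`,
i.e. the substitution `c_{ij} ↦ Σ_k g_{kj} c_{ik}`.  `S^λ E` is realized as the
coinvariant space `E^{⊗r}/⟨v·σ − v : σ ∈ Σ_λ⟩` with the descended diagonal `M_n`-action.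
The isomorphism is asserted to intertwine the two `M_n`-actions.
-/

open scoped BigOperators

namespace SchurPaper

variable (K : Type*) [Field K] (n r : ℕ)

abbrev TSp := (Fin r → Fin n) → K

def wt (i : Fin r → Fin n) : Fin n → ℕ :=
  fun j => (Finset.univ.filter fun k => i k = j).card

def placePerm (σ : Equiv.Perm (Fin r)) : TSp K n r →ₗ[K] TSp K n r :=
  LinearMap.funLeft K K fun i => i ∘ σ

/-- The canonical multi-index `ℓ(μ)` of weight `μ`: `μ_1` entries `1`, then `μ_2`
entries `2`, etc. -/
def ellComp [NeZero n] (mu : Fin n → ℕ) (k : Fin r) : Fin n :=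
  if h : (Finset.univ.filter fun j : Fin n =>
      (k : ℕ) < ∑ i ∈ Finset.univ.filter (· ≤ j), mu i).Nonempty
  then Finset.min' _ h
  else ⟨0, Nat.pos_of_ne_zero (NeZero.ne n)⟩

/-- The subspace of relations defining the coinvariants
`S^μ E = E^{⊗r} / ⟨v·σ − v : σ ∈ Σ_μ⟩`, where `Σ_μ` is the Young subgroup (the stabilizer
of `ℓ(μ)`). -/
def Nsub [NeZero n] (mu : Fin n → ℕ) : Submodule K (TSp K n r) :=
  Submodule.span K
    {x | ∃ (σ : Equiv.Perm (Fin r)) (f : TSp K n r),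
      ellComp n r mu ∘ σ = ellComp n r mu ∧ x = placePerm K n r σ f - f}

/-- The generalized symmetric power `S^μ E`, realized as the coinvariants of `E^{⊗r}`
under the Young subgroup `Σ_μ`. -/
abbrev SymPow [NeZero n] (mu : Fin n → ℕ) := TSp K n r ⧸ Nsub K n r mu

/-- The (diagonal) action of a matrix `g ∈ M_n(K)` on `E^{⊗r}`. -/
noncomputable def glAct (g : Matrix (Fin n) (Fin n) K) : Module.End K (TSp K n r) :=
  Matrix.toLin' (Matrix.of fun i j : Fin r → Fin n => ∏ k, g (i k) (j k))


/-- The substitution `c_{ij} ↦ t_i · c_{ij}`, i.e. precomposition with left multiplication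
by the diagonal matrix `t`. -/
noncomputable def diagSubst (t : Fin n → K) :
    MvPolynomial (Fin n × Fin n) K →ₗ[K] MvPolynomial (Fin n × Fin n) K :=
  (MvPolynomial.aeval fun q : Fin n × Fin n => t q.1 • MvPolynomial.X q).toLinearMap

/-- `ind_{D_n}^{M_n} K_λ`: regular functions on `M_n` with `f(t·x) = t^λ f(x)` for all
diagonal `t`. -/
noncomputable def IndSp (lam : Fin n → ℕ) : Submodule K (MvPolynomial (Fin n × Fin n) K) where
  carrier := {p | ∀ t : Fin n → K, diagSubst K n t p = (∏ i, t i ^ lam i) • p}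
  add_mem' := by
    intro p q hp hq t
    rw [map_add, hp t, hq t, smul_add]
  zero_mem' := fun t => by simp
  smul_mem' := by
    intro c p hp t
    rw [map_smul, hp t, smul_comm]

/-- The left `M_n`-action on functions on `M_n`: `(g·f)(x) = f(xg)`, i.e. the substitution
`c_{ij} ↦ Σ_k g_{kj} c_{ik}`. -/
noncomputable def lAct (g : Matrix (Fin n) (Fin n) K) :
    MvPolynomial (Fin n × Fin n) K →ₗ[K] MvPolynomial (Fin n × Fin n) K :=
  (MvPolynomial.aeval fun q : Fin n × Fin n =>
    ∑ k, g k q.2 • MvPolynomial.X (q.1, k)).toLinearMap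

section Aux

variable {K : Type*} [Field K] {n r : ℕ}

/-! ### Combinatorial preliminaries -/

lemma exists_perm_comp {X : Type*} [DecidableEq X] (f g : Fin r → X)
    (h : ∀ x : X, Fintype.card {k // f k = x} = Fintype.card {k // g k = x}) :
    ∃ σ : Equiv.Perm (Fin r), f = g ∘ σ := by
  let e : ∀ x, {k // f k = x} ≃ {k // g k = x} := fun x => Fintype.equivOfCardEq (h x)
  exact ⟨Equiv.ofFiberEquiv e, by ext k; exact (Equiv.ofFiberEquiv_map e k).symm⟩

lemma count_sum_single {X : Type*} [DecidableEq X] (g : Fin r → X) (x : X) :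
    (∑ k, Finsupp.single (g k) (1 : ℕ)) x = (Finset.univ.filter fun k => g k = x).card := by
  rw [Finset.sum_apply', Finset.card_filter]
  exact Finset.sum_congr rfl fun k _ => Finsupp.single_apply

/-- Exponent multi-index attached to a pair of tuples. -/
noncomputable def qOf (L j : Fin r → Fin n) : (Fin n × Fin n) →₀ ℕ :=
  ∑ k, Finsupp.single (L k, j k) 1

lemma qOf_apply (L j : Fin r → Fin n) (x : Fin n × Fin n) :
    qOf L j x = (Finset.univ.filter fun k => (L k, j k) = x).card :=
  count_sum_single _ x

lemma exists_perm_of_qOf_eq {L j j' : Fin r → Fin n} (h : qOf L j = qOf L j') :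
    ∃ σ : Equiv.Perm (Fin r), L ∘ σ = L ∧ j' = j ∘ σ := by
  classical
  obtain ⟨σ, hσ⟩ := exists_perm_comp (fun k => (L k, j k)) (fun k => (L k, j' k)) (by
    intro x
    simp only [Fintype.card_subtype]
    rw [← qOf_apply L j x, ← qOf_apply L j' x, h])
  refine ⟨σ⁻¹, funext fun k => ?_, funext fun k => ?_⟩
  · simpa using congrArg Prod.fst (congrFun hσ (σ⁻¹ k))
  · simpa using (congrArg Prod.snd (congrFun hσ (σ⁻¹ k))).symm

lemma qOf_comp_perm (L j : Fin r → Fin n) (σ : Equiv.Perm (Fin r)) (hL : L ∘ σ = L) :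
    qOf L (j ∘ σ) = qOf L j := by
  unfold qOf
  rw [← Equiv.sum_comp σ (fun k => Finsupp.single (L k, j k) 1)]
  refine Finset.sum_congr rfl fun k _ => ?_
  rw [show L (σ k) = L k from congrFun hL k]
  rfl

/-! ### Counting for `ellComp` -/

section EllComp

variable [NeZero n] (lam : Fin n → ℕ) (hlam : ∑ i, lam i = r)

def Fof (lam : Fin n → ℕ) (i : Fin n) : ℕ := ∑ j ∈ Finset.univ.filter (· ≤ i), lam j
def Gof (lam : Fin n → ℕ) (i : Fin n) : ℕ := ∑ j ∈ Finset.univ.filter (· < i), lam j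

omit [NeZero n] in
lemma Fmono {i i' : Fin n} (h : i ≤ i') : Fof lam i ≤ Fof lam i' :=
  Finset.sum_le_sum_of_subset (by
    intro j hj
    simp only [Finset.mem_filter, Finset.mem_univ, true_and] at hj ⊢
    exact le_trans hj h)

omit [NeZero n] in
include hlam in
lemma Fle (i : Fin n) : Fof lam i ≤ r := by
  rw [← hlam]
  exact Finset.sum_le_sum_of_subset (Finset.filter_subset _ _)

omit [NeZero n] in
include hlam in
lemma Gle (i : Fin n) : Gof lam i ≤ r := by
  rw [← hlam]
  exact Finset.sum_le_sum_of_subset (Finset.filter_subset _ _)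

include hlam in
lemma Snonempty (k : Fin r) :
    (Finset.univ.filter fun j : Fin n => (k : ℕ) < Fof lam j).Nonempty := by
  obtain ⟨m, rfl⟩ := Nat.exists_eq_succ_of_ne_zero (NeZero.ne n)
  refine ⟨Fin.last m, ?_⟩
  simp only [Finset.mem_filter, Finset.mem_univ, true_and]
  have : (Finset.univ.filter fun j : Fin (m+1) => j ≤ Fin.last m) = Finset.univ := by
    ext j; simp [Fin.le_last]
  rw [Fof, this, hlam]
  exact k.isLt

include hlam in
lemma ellComp_le_iff (k : Fin r) (i : Fin n) :
    ellComp n r lam k ≤ i ↔ (k : ℕ) < Fof lam i := by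
  have hne := Snonempty lam hlam k
  rw [ellComp, dif_pos (by exact hne)]
  constructor
  · intro h
    have hmem := Finset.min'_mem _ hne
    simp only [Finset.mem_filter, Finset.mem_univ, true_and] at hmem
    exact lt_of_lt_of_le hmem (Fmono lam h)
  · intro h
    exact Finset.min'_le _ i (by simp only [Finset.mem_filter, Finset.mem_univ, true_and]; exact h)

include hlam in
lemma ellComp_lt_iff (k : Fin r) (i : Fin n) :
    ellComp n r lam k < i ↔ (k : ℕ) < Gof lam i := by
  constructor
  · intro h
    have h1 : (k : ℕ) < Fof lam (ellComp n r lam k) :=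
      (ellComp_le_iff lam hlam k (ellComp n r lam k)).1 le_rfl
    refine lt_of_lt_of_le h1 (Finset.sum_le_sum_of_subset ?_)
    intro j hj
    simp only [Finset.mem_filter, Finset.mem_univ, true_and] at hj ⊢
    exact lt_of_le_of_lt hj h
  · intro h
    have hne : (Finset.univ.filter fun j : Fin n => j < i).Nonempty := by
      by_contra hc
      rw [Finset.not_nonempty_iff_eq_empty] at hc
      rw [Gof, hc] at h
      simp at h
    set j0 := Finset.max' _ hne with hj0
    have hj0lt : j0 < i := by
      have hm := Finset.max'_mem _ hne
      rw [Finset.mem_filter] at hm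
      exact hm.2
    have hfilter : (Finset.univ.filter fun j : Fin n => j < i)
        = Finset.univ.filter (· ≤ j0) := by
      ext j
      simp only [Finset.mem_filter, Finset.mem_univ, true_and]
      constructor
      · intro hj
        exact Finset.le_max' _ _ (by simp only [Finset.mem_filter, Finset.mem_univ, true_and]; exact hj)
      · intro hj
        exact lt_of_le_of_lt hj hj0lt
    rw [Gof, hfilter] at h
    exact lt_of_le_of_lt ((ellComp_le_iff lam hlam k j0).2 h) hj0lt

omit [NeZero n] in
lemma card_filter_val_lt (c : ℕ) (hc : c ≤ r) :
    (Finset.univ.filter fun k : Fin r => (k : ℕ) < c).card = c := by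
  classical
  rw [← Finset.card_image_of_injective _ Fin.val_injective]
  rw [show (Finset.univ.filter fun k : Fin r => (k : ℕ) < c).image Fin.val
      = Finset.range c from ?_]
  · exact Finset.card_range c
  ext m
  simp only [Finset.mem_image, Finset.mem_filter, Finset.mem_univ, true_and, Finset.mem_range]
  exact ⟨fun ⟨k, hk, he⟩ => he ▸ hk, fun hm => ⟨⟨m, lt_of_lt_of_le hm hc⟩, hm, rfl⟩⟩

include hlam in
lemma card_ellComp_eq (i : Fin n) :
    (Finset.univ.filter fun k : Fin r => ellComp n r lam k = i).card = lam i := by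
  classical
  have hsub : (Finset.univ.filter fun k : Fin r => ellComp n r lam k < i)
      ⊆ Finset.univ.filter fun k : Fin r => ellComp n r lam k ≤ i := by
    intro k hk; simp only [Finset.mem_filter, Finset.mem_univ, true_and] at hk ⊢
    exact le_of_lt hk
  have heq : (Finset.univ.filter fun k : Fin r => ellComp n r lam k = i)
      = (Finset.univ.filter fun k : Fin r => ellComp n r lam k ≤ i)
        \ (Finset.univ.filter fun k : Fin r => ellComp n r lam k < i) := by
    ext k
    simp only [Finset.mem_sdiff, Finset.mem_filter, Finset.mem_univ, true_and]
    constructor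
    · intro h; exact ⟨le_of_eq h, by rw [h]; exact lt_irrefl _⟩
    · intro ⟨h1, h2⟩; exact le_antisymm h1 (not_lt.1 h2)
  have c1 : (Finset.univ.filter fun k : Fin r => ellComp n r lam k ≤ i).card = Fof lam i := by
    rw [show (Finset.univ.filter fun k : Fin r => ellComp n r lam k ≤ i)
        = Finset.univ.filter fun k : Fin r => (k : ℕ) < Fof lam i from ?_]
    · exact card_filter_val_lt (Fof lam i) (Fle lam hlam i)
    ext k; simp only [Finset.mem_filter, Finset.mem_univ, true_and]
    exact ellComp_le_iff lam hlam k i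
  have c2 : (Finset.univ.filter fun k : Fin r => ellComp n r lam k < i).card = Gof lam i := by
    rw [show (Finset.univ.filter fun k : Fin r => ellComp n r lam k < i)
        = Finset.univ.filter fun k : Fin r => (k : ℕ) < Gof lam i from ?_]
    · exact card_filter_val_lt (Gof lam i) (Gle lam hlam i)
    ext k; simp only [Finset.mem_filter, Finset.mem_univ, true_and]
    exact ellComp_lt_iff lam hlam k i
  have hFG : Fof lam i = Gof lam i + lam i := by
    have hins : (Finset.univ.filter (· ≤ i))
        = insert i (Finset.univ.filter fun j : Fin n => j < i) := by
      ext j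
      simp only [Finset.mem_insert, Finset.mem_filter, Finset.mem_univ, true_and]
      rw [le_iff_lt_or_eq]; tauto
    rw [Fof, Gof, hins, Finset.sum_insert (by simp)]
    ring
  rw [heq, Finset.card_sdiff_of_subset hsub, c1, c2, hFG]
  omega

end EllComp

/-! ### Row degrees -/

noncomputable def rowdeg (m : (Fin n × Fin n) →₀ ℕ) (i : Fin n) : ℕ := ∑ j, m (i, j)

lemma prod_pow_rowdeg (t : Fin n → K) (m : (Fin n × Fin n) →₀ ℕ) :
    (m.prod fun p e => t p.1 ^ e) = ∏ i, t i ^ rowdeg m i := by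
  have h1 : (m.prod fun p e => t p.1 ^ e : K) = ∏ p : Fin n × Fin n, t p.1 ^ m p :=
    Finsupp.prod_fintype _ _ fun p => pow_zero _
  rw [h1, Fintype.prod_prod_type]
  refine Finset.prod_congr rfl fun i _ => ?_
  rw [rowdeg, ← Finset.prod_pow_eq_pow_sum]

lemma monomial_qOf' (u : Fin r → Fin n × Fin n) :
    MvPolynomial.monomial (∑ k, Finsupp.single (u k) 1) (1 : K) = ∏ k, MvPolynomial.X (u k) := by
  classical
  induction (Finset.univ : Finset (Fin r)) using Finset.induction with
  | empty => simp
  | insert a s h ih =>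
    rw [Finset.sum_insert h, Finset.prod_insert h, ← ih, MvPolynomial.X,
      MvPolynomial.monomial_mul, one_mul]

lemma diagSubst_monomial (t : Fin n → K) (m : (Fin n × Fin n) →₀ ℕ) (c : K) :
    diagSubst K n t (MvPolynomial.monomial m c)
      = (∏ i, t i ^ rowdeg m i) • MvPolynomial.monomial m c := by
  rw [diagSubst]
  simp only [AlgHom.toLinearMap_apply, MvPolynomial.aeval_monomial]
  have h2 : (m.prod fun p e => (t p.1 • MvPolynomial.X p) ^ e : MvPolynomial (Fin n × Fin n) K)
      = MvPolynomial.C (m.prod fun p e => t p.1 ^ e)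
        * m.prod fun p e => (MvPolynomial.X p : MvPolynomial (Fin n × Fin n) K) ^ e := by
    rw [map_finsuppProd, ← Finsupp.prod_mul]
    refine Finsupp.prod_congr fun p _ => ?_
    rw [smul_pow, MvPolynomial.smul_eq_C_mul, map_pow]
  rw [h2, prod_pow_rowdeg, MvPolynomial.algebraMap_eq, MvPolynomial.monomial_eq,
    MvPolynomial.smul_eq_C_mul]
  ring

lemma coeff_diagSubst (t : Fin n → K) (p : MvPolynomial (Fin n × Fin n) K)
    (m : (Fin n × Fin n) →₀ ℕ) :
    MvPolynomial.coeff m (diagSubst K n t p)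
      = (∏ i, t i ^ rowdeg m i) * MvPolynomial.coeff m p := by
  conv_lhs => rw [← MvPolynomial.support_sum_monomial_coeff p]
  rw [map_sum, MvPolynomial.coeff_sum]
  simp only [diagSubst_monomial, MvPolynomial.coeff_smul, MvPolynomial.coeff_monomial,
    smul_eq_mul, mul_ite, mul_zero]
  rw [Finset.sum_ite_eq' p.support m (fun m' => (∏ i, t i ^ rowdeg m' i) * MvPolynomial.coeff m' p)]
  by_cases hm : m ∈ p.support
  · rw [if_pos hm]
  · rw [if_neg hm, MvPolynomial.notMem_support_iff.1 hm, mul_zero]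

lemma prod_pow_inj [Infinite K] (a b : Fin n → ℕ)
    (h : ∀ t : Fin n → K, ∏ i, t i ^ a i = ∏ i, t i ^ b i) : a = b := by
  have key : ∀ (d : Fin n → ℕ) (t : Fin n → K),
      MvPolynomial.eval t (MvPolynomial.monomial (Finsupp.equivFunOnFinite.symm d) (1 : K))
        = ∏ i, t i ^ d i := by
    intro d t
    rw [MvPolynomial.eval_monomial, one_mul, Finsupp.prod_fintype _ _ fun p => pow_zero _]
    rfl
  have h2 : (MvPolynomial.monomial (Finsupp.equivFunOnFinite.symm a) (1 : K))
      = MvPolynomial.monomial (Finsupp.equivFunOnFinite.symm b) (1 : K) := by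
    apply MvPolynomial.funext
    intro t
    rw [key, key, h]
  rcases (MvPolynomial.monomial_eq_monomial_iff _ _ _ _).1 h2 with h3 | h3
  · exact Finsupp.equivFunOnFinite.symm.injective h3.1
  · exact absurd h3.1 one_ne_zero

/-! ### Fibers over first coordinates -/

lemma sum_ite_pair (a : Fin n × Fin n) (i : Fin n) :
    (∑ j' : Fin n, if a = (i, j') then (1 : ℕ) else 0) = if a.1 = i then 1 else 0 := by
  rcases a with ⟨a1, a2⟩
  simp only [Prod.mk.injEq, ite_and]
  by_cases h : a1 = i
  · simp [h, Finset.sum_ite_eq]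
  · simp [h]

lemma card_fst_fiber (g : Fin r → Fin n × Fin n) (i : Fin n) :
    (Finset.univ.filter fun k => (g k).1 = i).card
      = ∑ j' : Fin n, (Finset.univ.filter fun k => g k = (i, j')).card := by
  simp only [Finset.card_filter]
  rw [Finset.sum_comm]
  exact Finset.sum_congr rfl fun k _ => (sum_ite_pair (g k) i).symm

lemma rowdeg_qOf (L j : Fin r → Fin n) (i : Fin n) :
    rowdeg (qOf L j) i = (Finset.univ.filter fun k => L k = i).card := by
  have : rowdeg (qOf L j) i
      = ∑ j' : Fin n, (Finset.univ.filter fun k => (L k, j k) = (i, j')).card := by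
    rw [rowdeg]
    exact Finset.sum_congr rfl fun j' _ => qOf_apply L j (i, j')
  rw [this, ← card_fst_fiber (fun k => (L k, j k)) i]

/-- A sigma fiber is equivalent to the corresponding summand. -/
def sigmaFstFiber {α : Type*} (F : α → Type*) (x : α) : {s : Σ a, F a // s.1 = x} ≃ F x where
  toFun s := s.2 ▸ s.1.2
  invFun b := ⟨⟨x, b⟩, rfl⟩
  left_inv := by rintro ⟨⟨a, b⟩, h⟩; cases h; rfl
  right_inv b := rfl

lemma exists_tuple_count (m : (Fin n × Fin n) →₀ ℕ) (hm : ∑ p : Fin n × Fin n, m p = r) :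
    ∃ g : Fin r → Fin n × Fin n,
      ∀ x, (Finset.univ.filter fun k => g k = x).card = m x := by
  classical
  have hcard : Fintype.card (Fin r) = Fintype.card (Σ p : Fin n × Fin n, Fin (m p)) := by
    simp [Fintype.card_sigma, hm]
  let e : Fin r ≃ Σ p : Fin n × Fin n, Fin (m p) := Fintype.equivOfCardEq hcard
  refine ⟨fun k => (e k).1, fun x => ?_⟩
  rw [← Fintype.card_subtype]
  rw [Fintype.card_congr ((Equiv.subtypeEquiv e fun k => Iff.rfl).trans
    (sigmaFstFiber (fun p => Fin (m p)) x))]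
  exact Fintype.card_fin _

lemma exists_qOf (L : Fin r → Fin n) (m : (Fin n × Fin n) →₀ ℕ)
    (hrow : ∀ i, (Finset.univ.filter fun k => L k = i).card = rowdeg m i) :
    ∃ j : Fin r → Fin n, qOf L j = m := by
  classical
  have hsum : ∑ p : Fin n × Fin n, m p = r := by
    rw [Fintype.sum_prod_type]
    have : ∀ i, ∑ j : Fin n, m (i, j) = rowdeg m i := fun i => rfl
    calc ∑ i : Fin n, ∑ j : Fin n, m (i, j) = ∑ i : Fin n, rowdeg m i := rfl
    _ = ∑ i : Fin n, (Finset.univ.filter fun k => L k = i).card :=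
        (Finset.sum_congr rfl fun i _ => (hrow i).symm)
    _ = (Finset.univ : Finset (Fin r)).card :=
        (Finset.card_eq_sum_card_fiberwise fun k _ => Finset.mem_univ (L k)).symm
    _ = r := Finset.card_fin r
  obtain ⟨g, hg⟩ := exists_tuple_count m hsum
  have hfib : ∀ i : Fin n,
      Fintype.card {k // L k = i} = Fintype.card {k // (g k).1 = i} := by
    intro i
    simp only [Fintype.card_subtype]
    rw [hrow i, card_fst_fiber g i]
    rw [show rowdeg m i = ∑ j' : Fin n, m (i, j') from rfl]
    exact Finset.sum_congr rfl fun j' _ => (hg (i, j')).symm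
  obtain ⟨σ, hσ⟩ := exists_perm_comp L (fun k => (g k).1) hfib
  refine ⟨fun k => (g (σ k)).2, ?_⟩
  have hpair : ∀ k, ((L k, (g (σ k)).2) : Fin n × Fin n) = g (σ k) := by
    intro k
    have : L k = (g (σ k)).1 := congrFun hσ k
    rw [this]
  ext x
  rw [qOf_apply]
  rw [← hg x]
  rw [Finset.card_filter, Finset.card_filter]
  rw [← Equiv.sum_comp σ (fun k => if g k = x then (1:ℕ) else 0)]
  exact Finset.sum_congr rfl fun k _ => by rw [hpair k]

end Aux

section Main

open MvPolynomial

variable {K : Type*} [Field K] {n r : ℕ} [NeZero n]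

/-- The comparison map `E^{⊗r} → K[M_n]`, sending `e_j ↦ ∏_k c_{ℓ(k), j(k)}`. -/
noncomputable def Phi (lam : Fin n → ℕ) : TSp K n r →ₗ[K] MvPolynomial (Fin n × Fin n) K where
  toFun f := ∑ j : Fin r → Fin n, f j • MvPolynomial.monomial (qOf (ellComp n r lam) j) (1 : K)
  map_add' f g := by simp [add_smul, Finset.sum_add_distrib]
  map_smul' c f := by simp [smul_smul, Finset.smul_sum]

lemma Phi_apply (lam : Fin n → ℕ) (f : TSp K n r) :
    Phi lam f = ∑ j : Fin r → Fin n,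
      f j • MvPolynomial.monomial (qOf (ellComp n r lam) j) (1 : K) := rfl

lemma Phi_single (lam : Fin n → ℕ) (j : Fin r → Fin n) (c : K) :
    Phi lam (Pi.single j c) = MvPolynomial.monomial (qOf (ellComp n r lam) j) c := by
  classical
  rw [Phi_apply]
  rw [Finset.sum_eq_single j]
  · rw [Pi.single_eq_same, MvPolynomial.smul_monomial, smul_eq_mul, mul_one]
  · intro j' _ hne
    rw [Pi.single_eq_of_ne hne, zero_smul]
  · intro h
    exact absurd (Finset.mem_univ j) h

lemma coeff_Phi (lam : Fin n → ℕ) (f : TSp K n r) (m : (Fin n × Fin n) →₀ ℕ) :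
    MvPolynomial.coeff m (Phi lam f)
      = ∑ j ∈ Finset.univ.filter fun j => qOf (ellComp n r lam) j = m, f j := by
  classical
  rw [Phi_apply, MvPolynomial.coeff_sum, Finset.sum_filter]
  refine Finset.sum_congr rfl fun j _ => ?_
  rw [MvPolynomial.coeff_smul, MvPolynomial.coeff_monomial]
  by_cases h : qOf (ellComp n r lam) j = m
  · rw [if_pos h, if_pos h, smul_eq_mul, mul_one]
  · rw [if_neg h, if_neg h, smul_eq_mul, mul_zero]

lemma mem_IndSp_of_rowdeg (lam : Fin n → ℕ) (m : (Fin n × Fin n) →₀ ℕ) (c : K)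
    (h : rowdeg m = lam) : MvPolynomial.monomial m c ∈ IndSp K n lam := by
  intro t
  rw [diagSubst_monomial, h]

lemma Phi_mem (lam : Fin n → ℕ) (hlam : ∑ i, lam i = r) (f : TSp K n r) :
    Phi lam f ∈ IndSp K n lam := by
  rw [Phi_apply]
  refine Submodule.sum_mem _ fun j _ => Submodule.smul_mem _ _ ?_
  refine mem_IndSp_of_rowdeg lam _ _ (funext fun i => ?_)
  rw [rowdeg_qOf, card_ellComp_eq lam hlam i]

lemma rowdeg_eq_of_mem [Infinite K] {lam : Fin n → ℕ} {p : MvPolynomial (Fin n × Fin n) K}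
    (hp : p ∈ IndSp K n lam) {m : (Fin n × Fin n) →₀ ℕ} (hm : m ∈ p.support) :
    rowdeg m = lam := by
  refine prod_pow_inj (K := K) _ _ fun t => ?_
  have h1 := congrArg (MvPolynomial.coeff m) (hp t)
  rw [coeff_diagSubst, MvPolynomial.coeff_smul, smul_eq_mul] at h1
  exact mul_right_cancel₀ (MvPolynomial.mem_support_iff.1 hm) h1

lemma IndSp_le_range (lam : Fin n → ℕ) (hlam : ∑ i, lam i = r) [Infinite K]
    {p : MvPolynomial (Fin n × Fin n) K} (hp : p ∈ IndSp K n lam) :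
    p ∈ LinearMap.range (Phi (K := K) (n := n) (r := r) lam) := by
  classical
  rw [← MvPolynomial.support_sum_monomial_coeff p]
  refine Submodule.sum_mem _ fun m hm => ?_
  have hrow : rowdeg m = lam := rowdeg_eq_of_mem hp hm
  obtain ⟨j, hj⟩ := exists_qOf (ellComp n r lam) m (fun i => by
    rw [card_ellComp_eq lam hlam i, hrow])
  exact ⟨Pi.single j (MvPolynomial.coeff m p), by rw [Phi_single, hj]⟩

lemma placePerm_single (σ : Equiv.Perm (Fin r)) (j : Fin r → Fin n) (c : K) :
    placePerm K n r σ (Pi.single j c) = Pi.single (j ∘ ⇑σ⁻¹) c := by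
  classical
  funext i
  show (Pi.single j c : TSp K n r) (i ∘ ⇑σ) = (Pi.single (j ∘ ⇑σ⁻¹) c : TSp K n r) i
  rw [Pi.single_apply, Pi.single_apply]
  congr 1
  simp only [eq_iff_iff]
  constructor
  · rintro rfl; funext k; simp
  · rintro rfl; funext k; simp

lemma Phi_placePerm (lam : Fin n → ℕ) (σ : Equiv.Perm (Fin r))
    (hσ : ellComp n r lam ∘ σ = ellComp n r lam) (f : TSp K n r) :
    Phi lam (placePerm K n r σ f) = Phi lam f := by
  classical
  rw [Phi_apply, Phi_apply]
  have hAct : ∀ j : Fin r → Fin n, placePerm K n r σ f j = f (j ∘ σ) := fun j => rfl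
  refine Fintype.sum_equiv
    ⟨fun j : Fin r → Fin n => j ∘ ⇑σ, fun j => j ∘ ⇑σ⁻¹,
      fun j => by funext k; simp, fun j => by funext k; simp⟩ _ _ fun j => ?_
  simp only [Equiv.coe_fn_mk, hAct]
  rw [qOf_comp_perm _ _ σ hσ]

lemma Nsub_le_ker (lam : Fin n → ℕ) :
    Nsub K n r lam ≤ LinearMap.ker (Phi (K := K) (n := n) (r := r) lam) := by
  rw [Nsub, Submodule.span_le]
  rintro x ⟨σ, f, hσ, rfl⟩
  simp only [SetLike.mem_coe, LinearMap.mem_ker, map_sub]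
  rw [Phi_placePerm lam σ hσ f, sub_self]

lemma mk_single_congr (lam : Fin n → ℕ) {j j' : Fin r → Fin n}
    (h : qOf (ellComp n r lam) j = qOf (ellComp n r lam) j') :
    (Submodule.Quotient.mk (Pi.single j (1 : K)) : SymPow K n r lam)
      = Submodule.Quotient.mk (Pi.single j' (1 : K)) := by
  obtain ⟨σ, hσ, hj⟩ := exists_perm_of_qOf_eq h
  have hσ' : ellComp n r lam ∘ ⇑σ⁻¹ = ellComp n r lam := by
    funext k
    have := congrFun hσ (σ⁻¹ k)
    simpa using this.symm
  rw [(Submodule.Quotient.eq _)]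
  have hrepr : Pi.single j (1 : K) - Pi.single j' (1 : K)
      = -(placePerm K n r σ⁻¹ (Pi.single j (1 : K)) - Pi.single j (1 : K)) := by
    rw [placePerm_single]
    simp only [inv_inv]
    rw [hj]
    abel
  rw [hrepr]
  exact Submodule.neg_mem _ (Submodule.subset_span ⟨σ⁻¹, Pi.single j 1, hσ', rfl⟩)

lemma ker_le_Nsub (lam : Fin n → ℕ) :
    LinearMap.ker (Phi (K := K) (n := n) (r := r) lam) ≤ Nsub K n r lam := by
  classical
  intro f hf
  rw [LinearMap.mem_ker] at hf
  have hcoeff : ∀ m : (Fin n × Fin n) →₀ ℕ,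
      ∑ j ∈ Finset.univ.filter (fun j => qOf (ellComp n r lam) j = m), f j = 0 := by
    intro m
    rw [← coeff_Phi, hf, MvPolynomial.coeff_zero]
  rw [← Submodule.Quotient.mk_eq_zero]
  have hf' : f = ∑ j : Fin r → Fin n, f j • (Pi.single j (1 : K) : TSp K n r) := by
    conv_lhs => rw [← Finset.univ_sum_single f]
    exact Finset.sum_congr rfl fun j _ => by
      rw [← Pi.single_smul, smul_eq_mul, mul_one]
  calc (Submodule.Quotient.mk f : SymPow K n r lam)
      = ∑ j : Fin r → Fin n, f j •
          (Submodule.Quotient.mk (Pi.single j (1 : K)) : SymPow K n r lam) := by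
        conv_lhs => rw [hf']
        rw [← Submodule.mkQ_apply, map_sum]
        exact Finset.sum_congr rfl fun j _ => by rw [map_smul, Submodule.mkQ_apply]
    _ = ∑ m ∈ Finset.univ.image (fun j : Fin r → Fin n => qOf (ellComp n r lam) j),
          ∑ j ∈ Finset.univ.filter (fun j => qOf (ellComp n r lam) j = m),
            f j • (Submodule.Quotient.mk (Pi.single j (1 : K)) : SymPow K n r lam) :=
        (Finset.sum_fiberwise_of_maps_to (fun j _ => Finset.mem_image_of_mem _ (Finset.mem_univ j)) _).symm
    _ = 0 := by
        refine Finset.sum_eq_zero fun m hm => ?_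
        obtain ⟨j0, _, hj0⟩ := Finset.mem_image.1 hm
        have : ∀ j ∈ Finset.univ.filter (fun j => qOf (ellComp n r lam) j = m),
            f j • (Submodule.Quotient.mk (Pi.single j (1 : K)) : SymPow K n r lam)
              = f j • (Submodule.Quotient.mk (Pi.single j0 (1 : K)) : SymPow K n r lam) := by
          intro j hj
          rw [Finset.mem_filter] at hj
          rw [mk_single_congr lam (hj.2.trans hj0.symm)]
        rw [Finset.sum_congr rfl this, ← Finset.sum_smul, hcoeff m, zero_smul]

lemma prod_smul_X (c : Fin r → K) (u : Fin r → Fin n × Fin n) :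
    (∏ k, (c k • MvPolynomial.X (u k) : MvPolynomial (Fin n × Fin n) K))
      = (∏ k, c k) • ∏ k, (MvPolynomial.X (u k) : MvPolynomial (Fin n × Fin n) K) := by
  simp only [MvPolynomial.smul_eq_C_mul, Finset.prod_mul_distrib, map_prod]

lemma monomial_qOf (L j : Fin r → Fin n) :
    MvPolynomial.monomial (qOf L j) (1 : K) = ∏ k, MvPolynomial.X (L k, j k) := by
  rw [qOf, monomial_qOf']

lemma lAct_monomial_qOf (g : Matrix (Fin n) (Fin n) K) (L j : Fin r → Fin n) :
    lAct K n g (MvPolynomial.monomial (qOf L j) (1 : K))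
      = ∑ i : Fin r → Fin n, (∏ k, g (i k) (j k)) • MvPolynomial.monomial (qOf L i) (1 : K) := by
  rw [monomial_qOf, lAct]
  rw [AlgHom.toLinearMap_apply, map_prod]
  simp only [MvPolynomial.aeval_X]
  rw [Finset.prod_univ_sum]
  rw [Fintype.piFinset_univ]
  refine Finset.sum_congr rfl fun i _ => ?_
  rw [prod_smul_X, monomial_qOf]

lemma glAct_apply (g : Matrix (Fin n) (Fin n) K) (f : TSp K n r) (i : Fin r → Fin n) :
    glAct K n r g f i = ∑ j : Fin r → Fin n, (∏ k, g (i k) (j k)) * f j := by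
  rw [glAct, Matrix.toLin'_apply]
  rfl

lemma Phi_glAct (lam : Fin n → ℕ) (g : Matrix (Fin n) (Fin n) K) (f : TSp K n r) :
    Phi lam (glAct K n r g f) = lAct K n g (Phi lam f) := by
  rw [Phi_apply, Phi_apply, map_sum]
  simp only [LinearMap.map_smul, lAct_monomial_qOf, glAct_apply, Finset.sum_smul,
    Finset.smul_sum, smul_smul]
  rw [Finset.sum_comm]
  refine Finset.sum_congr rfl fun j _ => Finset.sum_congr rfl fun i _ => by rw [mul_comm]

end Main

theorem ind_iso_symPow [Infinite K] [NeZero n]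
    (lam : Fin n → ℕ) (hlam : ∑ i, lam i = r) :
    ∃ e : ↥(IndSp K n lam) ≃ₗ[K] SymPow K n r lam,
      ∀ (g : Matrix (Fin n) (Fin n) K) (v w : ↥(IndSp K n lam)),
        ((w : MvPolynomial (Fin n × Fin n) K)
            = lAct K n g (v : MvPolynomial (Fin n × Fin n) K)) →
        ∀ y : Module.End K (SymPow K n r lam),
          (∀ t : TSp K n r,
            y (Submodule.Quotient.mk t) = Submodule.Quotient.mk (glAct K n r g t)) →
          e w = y (e v) := by
  classical
  let Phi' : TSp K n r →ₗ[K] ↥(IndSp K n lam) :=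
    (Phi (K := K) (n := n) (r := r) lam).codRestrict (IndSp K n lam) (Phi_mem lam hlam)
  have hker : Nsub K n r lam ≤ LinearMap.ker Phi' := by
    intro x hx
    have hx' := Nsub_le_ker lam hx
    rw [LinearMap.mem_ker] at hx' ⊢
    exact Subtype.ext (by rw [LinearMap.codRestrict_apply]; exact hx')
  let Phibar : SymPow K n r lam →ₗ[K] ↥(IndSp K n lam) := (Nsub K n r lam).liftQ Phi' hker
  have hPhibar_mk : ∀ t : TSp K n r,
      ((Phibar (Submodule.Quotient.mk t) : ↥(IndSp K n lam)) : MvPolynomial (Fin n × Fin n) K)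
        = Phi lam t := by
    intro t
    show ((Phi' t : ↥(IndSp K n lam)) : MvPolynomial (Fin n × Fin n) K) = Phi lam t
    rw [LinearMap.codRestrict_apply]
  have hinj : Function.Injective Phibar := by
    rw [← LinearMap.ker_eq_bot]
    apply Submodule.ker_liftQ_eq_bot
    intro x hx
    rw [LinearMap.mem_ker] at hx
    apply ker_le_Nsub lam
    rw [LinearMap.mem_ker]
    have : ((Phi' x : ↥(IndSp K n lam)) : MvPolynomial (Fin n × Fin n) K) = 0 :=
      congrArg Subtype.val hx
    rw [LinearMap.codRestrict_apply] at this
    exact this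
  have hsurj : Function.Surjective Phibar := by
    intro w
    obtain ⟨t, ht⟩ := IndSp_le_range lam hlam w.2
    exact ⟨Submodule.Quotient.mk t, Subtype.ext (by rw [hPhibar_mk]; exact ht)⟩
  let E := LinearEquiv.ofBijective Phibar ⟨hinj, hsurj⟩
  have hE : ∀ x, E x = Phibar x := fun x => rfl
  refine ⟨E.symm, ?_⟩
  intro g v w hw y hy
  obtain ⟨t, ht⟩ := Submodule.Quotient.mk_surjective _ (E.symm v)
  have hv : (v : MvPolynomial (Fin n × Fin n) K) = Phi lam t := by
    have h1 : Phibar (Submodule.Quotient.mk t) = v := by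
      rw [← hE, ht, E.apply_symm_apply]
    rw [← h1, hPhibar_mk]
  have hw' : Phibar (Submodule.Quotient.mk (glAct K n r g t)) = w := by
    apply Subtype.ext
    rw [hPhibar_mk, Phi_glAct lam g t, ← hv, ← hw]
  calc E.symm w
      = E.symm (E (Submodule.Quotient.mk (glAct K n r g t))) := by rw [hE, hw']
    _ = Submodule.Quotient.mk (glAct K n r g t) := E.symm_apply_apply _
    _ = y (Submodule.Quotient.mk t) := (hy t).symm
    _ = y (E.symm v) := by rw [ht]

end SchurPaper
end

section
/- If n ≥ r and ω = (1,…,1,0,…,0) ∈ Λ(n,r) (r ones), then the algebra 1_ω S_K(n,r) 1_ω is isomorphic to the group algebra KΣ_r. -/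
/-!
STATEMENT 3: If `n ≥ r` and `ω = (1,…,1,0,…,0) ∈ Λ(n,r)` (`r` ones), then the algebra
`1_ω S_K(n,r) 1_ω` is isomorphic to the group algebra `K Σ_r`.

We model the Schur algebra and the weight idempotents as in the other statements, and
assert the existence of a `K`-linear bijection `1_ω S_K(n,r) 1_ω ≅ K Σ_r` which is
multiplicative and unital, i.e. an isomorphism of `K`-algebras.
-/

open scoped BigOperators

namespace SchurPaper

variable (K : Type*) [Field K] (n r : ℕ)

lemma wt_comp (i : Fin r → Fin n) (σ : Equiv.Perm (Fin r)) :
    wt n r (i ∘ σ) = wt n r i := by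
  funext j
  exact Finset.card_equiv σ (fun k => by simp [Function.comp])

def proj (lam : Fin n → ℕ) : TSp K n r →ₗ[K] TSp K n r where
  toFun f := fun i => if wt n r i = lam then f i else 0
  map_add' f g := by
    funext i; by_cases h : wt n r i = lam <;> simp [h]
  map_smul' c f := by
    funext i; by_cases h : wt n r i = lam <;> simp [h]

def heckeBimodule (lam mu : Fin n → ℕ) : Submodule K (Module.End K (TSp K n r)) where
  carrier := {x | (∀ σ, x ∘ₗ placePerm K n r σ = placePerm K n r σ ∘ₗ x) ∧
      proj K n r lam ∘ₗ x ∘ₗ proj K n r mu = x}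
  add_mem' := by
    rintro x y ⟨hx1, hx2⟩ ⟨hy1, hy2⟩
    refine ⟨fun σ => ?_, ?_⟩
    · rw [LinearMap.add_comp, LinearMap.comp_add, hx1 σ, hy1 σ]
    · conv_lhs => rw [LinearMap.add_comp, LinearMap.comp_add]
      rw [hx2, hy2]
  zero_mem' := ⟨fun σ => by simp, by simp⟩
  smul_mem' := by
    rintro c x ⟨hx1, hx2⟩
    refine ⟨fun σ => ?_, ?_⟩
    · rw [LinearMap.smul_comp, LinearMap.comp_smul, hx1 σ]
    · conv_lhs => rw [LinearMap.smul_comp, LinearMap.comp_smul]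
      rw [hx2]

abbrev Mmod (lam : Fin n → ℕ) := {i : Fin r → Fin n // wt n r i = lam} → K

def permM (lam : Fin n → ℕ) (σ : Equiv.Perm (Fin r)) :
    Mmod K n r lam →ₗ[K] Mmod K n r lam :=
  LinearMap.funLeft K K fun p => ⟨p.1 ∘ σ, by rw [wt_comp, p.2]⟩

def HomSigma (mu lam : Fin n → ℕ) : Submodule K (Mmod K n r mu →ₗ[K] Mmod K n r lam) where
  carrier := {φ | ∀ σ, φ ∘ₗ permM K n r mu σ = permM K n r lam σ ∘ₗ φ}
  add_mem' := by
    intro φ ψ hφ hψ σ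
    rw [LinearMap.add_comp, LinearMap.comp_add, hφ σ, hψ σ]
  zero_mem' := fun σ => by simp
  smul_mem' := by
    intro c φ hφ σ
    rw [LinearMap.smul_comp, LinearMap.comp_smul, hφ σ]

def iotaM (lam : Fin n → ℕ) : Mmod K n r lam →ₗ[K] TSp K n r where
  toFun f := fun i => if h : wt n r i = lam then f ⟨i, h⟩ else 0
  map_add' f g := by funext i; by_cases h : wt n r i = lam <;> simp [h]
  map_smul' c f := by funext i; by_cases h : wt n r i = lam <;> simp [h]

def resM (lam : Fin n → ℕ) : TSp K n r →ₗ[K] Mmod K n r lam :=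
  LinearMap.funLeft K K Subtype.val

/-- The special weight `ω = (1^r, 0^{n-r})`. -/
def omegaWt : Fin n → ℕ := fun j => if (j : ℕ) < r then 1 else 0


/-! ### Auxiliary material -/

section Aux

lemma wt_i0 (hnr : r ≤ n) : wt n r (Fin.castLE hnr) = omegaWt n r := by
  funext j
  simp only [wt, omegaWt]
  by_cases h : (j : ℕ) < r
  · rw [if_pos h]
    have : (Finset.univ.filter fun k : Fin r => Fin.castLE hnr k = j) = {⟨j, h⟩} := by
      ext k
      simp [Fin.ext_iff]
    rw [this, Finset.card_singleton]
  · rw [if_neg h, Finset.card_eq_zero, Finset.filter_eq_empty_iff]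
    intro k _ hk
    apply h
    have : ((Fin.castLE hnr k : Fin n) : ℕ) = (j : ℕ) := by rw [hk]
    simpa using this ▸ k.isLt

lemma lt_of_wt {i : Fin r → Fin n} (hi : wt n r i = omegaWt n r) (k : Fin r) :
    (i k : ℕ) < r := by
  by_contra h
  have h0 : wt n r i (i k) = 0 := by rw [hi]; simp [omegaWt, h]
  simp only [wt] at h0
  rw [Finset.card_eq_zero] at h0
  have hk : k ∈ Finset.univ.filter fun m => i m = i k := by simp
  rw [h0] at hk
  exact absurd hk (Finset.notMem_empty k)

lemma inj_of_wt {i : Fin r → Fin n} (hi : wt n r i = omegaWt n r) :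
    Function.Injective i := by
  intro k l hkl
  have h1 : wt n r i (i k) = 1 := by rw [hi]; simp [omegaWt, lt_of_wt n r hi k]
  simp only [wt] at h1
  exact Finset.card_le_one.mp h1.le k (by simp) l (by simp [hkl])

noncomputable def permOf (i : Fin r → Fin n) (hi : wt n r i = omegaWt n r) : Equiv.Perm (Fin r) :=
  Equiv.ofBijective (fun k => (⟨(i k : ℕ), lt_of_wt n r hi k⟩ : Fin r))
    (Finite.injective_iff_bijective.mp fun k l h =>
      inj_of_wt n r hi (Fin.val_injective (by simpa using congrArg Fin.val h)))

lemma i0_comp_permOf (hnr : r ≤ n) (i : Fin r → Fin n) (hi : wt n r i = omegaWt n r) :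
    Fin.castLE hnr ∘ (permOf n r i hi) = i := by
  funext k; exact Fin.ext rfl

lemma wt_i0_comp (hnr : r ≤ n) (σ : Equiv.Perm (Fin r)) :
    wt n r (Fin.castLE hnr ∘ σ) = omegaWt n r := by
  rw [wt_comp, wt_i0]

lemma permOf_i0_comp (hnr : r ≤ n) (σ : Equiv.Perm (Fin r))
    (h : wt n r (Fin.castLE hnr ∘ σ) = omegaWt n r) :
    permOf n r (Fin.castLE hnr ∘ σ) h = σ := by
  apply Equiv.ext; intro k; exact Fin.ext rfl

lemma permOf_comp (i : Fin r → Fin n) (hi : wt n r i = omegaWt n r)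
    (σ : Equiv.Perm (Fin r)) (h2 : wt n r (i ∘ σ) = omegaWt n r) :
    permOf n r (i ∘ σ) h2 = permOf n r i hi * σ := by
  apply Equiv.ext; intro k; exact Fin.ext rfl

lemma i0_comp_inj (hnr : r ≤ n) {a b : Equiv.Perm (Fin r)}
    (h : Fin.castLE hnr ∘ a = Fin.castLE hnr ∘ b) : a = b := by
  apply Equiv.ext; intro k
  exact Fin.val_injective (by simpa using congrArg Fin.val (congrFun h k))

/-- The delta function at the base point `i₀ = castLE`. -/
def dlt (hnr : r ≤ n) : TSp K n r := fun i => if i = Fin.castLE hnr then 1 else 0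

def Emap (hnr : r ≤ n) :
    ↥(heckeBimodule K n r (omegaWt n r) (omegaWt n r)) →ₗ[K] (Equiv.Perm (Fin r) → K) where
  toFun x := fun σ =>
    (x : Module.End K (TSp K n r)) (dlt K n r hnr) (Fin.castLE hnr ∘ σ)
  map_add' x y := rfl
  map_smul' c x := rfl

noncomputable def Bop (hnr : r ≤ n) (g : Equiv.Perm (Fin r)) : Module.End K (TSp K n r) where
  toFun f := fun i =>
    if h : wt n r i = omegaWt n r then
      f (Fin.castLE hnr ∘ ⇑(g⁻¹ * permOf n r i h)) else 0
  map_add' f f' := by funext i; by_cases h : wt n r i = omegaWt n r <;> simp [h]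
  map_smul' c f := by funext i; by_cases h : wt n r i = omegaWt n r <;> simp [h]

lemma Bop_mem (hnr : r ≤ n) (g : Equiv.Perm (Fin r)) :
    Bop K n r hnr g ∈ heckeBimodule K n r (omegaWt n r) (omegaWt n r) := by
  constructor
  · intro σ
    apply LinearMap.ext; intro f; funext i
    simp only [LinearMap.comp_apply, Bop, placePerm, LinearMap.funLeft_apply,
      LinearMap.coe_mk, AddHom.coe_mk]
    by_cases h : wt n r i = omegaWt n r
    · have h' : wt n r (i ∘ σ) = omegaWt n r := by rw [wt_comp, h]
      rw [dif_pos h, dif_pos h']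
      rw [permOf_comp n r i h σ h']
      rfl
    · have h' : ¬ wt n r (i ∘ σ) = omegaWt n r := by rw [wt_comp]; exact h
      rw [dif_neg h, dif_neg h']
  · apply LinearMap.ext; intro f; funext i
    simp only [LinearMap.comp_apply, Bop, proj, LinearMap.coe_mk, AddHom.coe_mk]
    by_cases h : wt n r i = omegaWt n r
    · rw [if_pos h, dif_pos h, dif_pos h, if_pos (wt_i0_comp n r hnr _)]
    · rw [if_neg h, dif_neg h]

noncomputable def Gmap (hnr : r ≤ n) :
    (Equiv.Perm (Fin r) → K) →ₗ[K] ↥(heckeBimodule K n r (omegaWt n r) (omegaWt n r)) where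
  toFun c := ⟨∑ g : Equiv.Perm (Fin r), c g • Bop K n r hnr g,
    Submodule.sum_mem _ fun g _ => Submodule.smul_mem _ _ (Bop_mem K n r hnr g)⟩
  map_add' c d := Subtype.ext (by simp [add_smul, Finset.sum_add_distrib])
  map_smul' a c := Subtype.ext (by simp [smul_smul, Finset.smul_sum])

lemma x_apply_ne (x : Module.End K (TSp K n r))
    (hx : x ∈ heckeBimodule K n r (omegaWt n r) (omegaWt n r))
    (f : TSp K n r) (i : Fin r → Fin n) (h : ¬ wt n r i = omegaWt n r) :
    x f i = 0 := by
  rw [← hx.2]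
  simp only [LinearMap.comp_apply, proj, LinearMap.coe_mk, AddHom.coe_mk]
  rw [if_neg h]

lemma proj_decomp (hnr : r ≤ n) (f : TSp K n r) :
    proj K n r (omegaWt n r) f
      = ∑ g : Equiv.Perm (Fin r), f (Fin.castLE hnr ∘ g) •
          placePerm K n r g⁻¹ (dlt K n r hnr) := by
  funext i
  rw [Finset.sum_apply]
  simp only [proj, LinearMap.coe_mk, AddHom.coe_mk, Pi.smul_apply, smul_eq_mul,
    placePerm, LinearMap.funLeft_apply, dlt]
  have key : ∀ g : Equiv.Perm (Fin r), (i ∘ ⇑g⁻¹ = Fin.castLE hnr) ↔ i = Fin.castLE hnr ∘ g := by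
    intro g
    constructor
    · intro hg
      funext k
      have := congrFun hg (g k)
      simpa using this
    · intro hg
      funext k
      rw [hg]
      simp
  by_cases h : wt n r i = omegaWt n r
  · rw [if_pos h]
    have hcond : ∀ g : Equiv.Perm (Fin r),
        (i ∘ ⇑g⁻¹ = Fin.castLE hnr) ↔ g = permOf n r i h := by
      intro g
      rw [key g]
      constructor
      · intro hg
        exact i0_comp_inj n r hnr (by rw [← hg, i0_comp_permOf])
      · intro hg
        rw [hg, i0_comp_permOf]
    rw [Finset.sum_congr rfl fun g _ => by
      rw [mul_ite, mul_one, mul_zero, if_congr (hcond g) rfl rfl]]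
    rw [Finset.sum_ite_eq' Finset.univ (permOf n r i h)
      (fun g => f (Fin.castLE hnr ∘ g))]
    rw [if_pos (Finset.mem_univ _), i0_comp_permOf]
  · rw [if_neg h]
    symm
    apply Finset.sum_eq_zero
    intro g _
    rw [mul_ite, mul_one, mul_zero, if_neg]
    intro hg
    exact h ((key g).mp hg ▸ wt_i0_comp n r hnr g)

lemma key_formula (hnr : r ≤ n) (x : Module.End K (TSp K n r))
    (hx : x ∈ heckeBimodule K n r (omegaWt n r) (omegaWt n r))
    (f : TSp K n r) (i : Fin r → Fin n) (h : wt n r i = omegaWt n r) :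
    x f i = ∑ g : Equiv.Perm (Fin r),
      x (dlt K n r hnr) (Fin.castLE hnr ∘ g)
        * f (Fin.castLE hnr ∘ ⇑(g⁻¹ * permOf n r i h)) := by
  have hcomm : ∀ g : Equiv.Perm (Fin r),
      x (placePerm K n r g⁻¹ (dlt K n r hnr))
        = placePerm K n r g⁻¹ (x (dlt K n r hnr)) :=
    fun g => LinearMap.congr_fun (hx.1 g⁻¹) (dlt K n r hnr)
  have h1 : x f i = x (proj K n r (omegaWt n r) f) i := by
    conv_lhs => rw [← hx.2]
    simp only [LinearMap.comp_apply, proj, LinearMap.coe_mk, AddHom.coe_mk]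
    rw [if_pos h]
  rw [h1, proj_decomp K n r hnr f, map_sum, Finset.sum_apply]
  have step : ∀ υ : Equiv.Perm (Fin r),
      (x (f (Fin.castLE hnr ∘ υ) • placePerm K n r υ⁻¹ (dlt K n r hnr))) i
        = f (Fin.castLE hnr ∘ υ) * x (dlt K n r hnr) (i ∘ ⇑υ⁻¹) := by
    intro υ
    rw [map_smul, Pi.smul_apply, smul_eq_mul, hcomm υ]
    rfl
  rw [Finset.sum_congr rfl fun υ _ => step υ]
  apply Fintype.sum_equiv
    ((Equiv.inv (Equiv.Perm (Fin r))).trans (Equiv.mulLeft (permOf n r i h)))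
  intro υ
  have e0 : ((Equiv.inv (Equiv.Perm (Fin r))).trans
      (Equiv.mulLeft (permOf n r i h))) υ = permOf n r i h * υ⁻¹ := rfl
  have e1 : (permOf n r i h * υ⁻¹)⁻¹ * permOf n r i h = υ := by group
  have e2 : i ∘ ⇑υ⁻¹ = Fin.castLE hnr ∘ ⇑(permOf n r i h * υ⁻¹) := by
    conv_lhs => rw [← i0_comp_permOf n r hnr i h]
    rfl
  rw [e0, e1, e2, mul_comm]

lemma GE (hnr : r ≤ n) (x : ↥(heckeBimodule K n r (omegaWt n r) (omegaWt n r))) :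
    Gmap K n r hnr (Emap K n r hnr x) = x := by
  apply Subtype.ext
  apply LinearMap.ext; intro f
  funext i
  have expand : (↑(Gmap K n r hnr (Emap K n r hnr x)) : Module.End K (TSp K n r)) f i
      = ∑ g : Equiv.Perm (Fin r),
          Emap K n r hnr x g * (Bop K n r hnr g f i) := by
    show ((∑ g : Equiv.Perm (Fin r), Emap K n r hnr x g • Bop K n r hnr g) f) i = _
    rw [LinearMap.sum_apply, Finset.sum_apply]
    exact Finset.sum_congr rfl fun g _ => rfl
  rw [expand]
  by_cases h : wt n r i = omegaWt n r
  · rw [show (↑x : Module.End K (TSp K n r)) f i = _ from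
      key_formula K n r hnr ↑x x.2 f i h]
    refine Finset.sum_congr rfl fun g _ => ?_
    simp only [Bop, LinearMap.coe_mk, AddHom.coe_mk]
    rw [dif_pos h]
    rfl
  · rw [x_apply_ne K n r ↑x x.2 f i h]
    apply Finset.sum_eq_zero
    intro g _
    simp only [Bop, LinearMap.coe_mk, AddHom.coe_mk]
    rw [dif_neg h, mul_zero]

lemma EG (hnr : r ≤ n) (c : Equiv.Perm (Fin r) → K) :
    Emap K n r hnr (Gmap K n r hnr c) = c := by
  funext σ
  show ((∑ g : Equiv.Perm (Fin r), c g • Bop K n r hnr g)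
      (dlt K n r hnr)) (Fin.castLE hnr ∘ σ) = c σ
  rw [LinearMap.sum_apply, Finset.sum_apply]
  have hb : ∀ g : Equiv.Perm (Fin r),
      (c g • Bop K n r hnr g) (dlt K n r hnr) (Fin.castLE hnr ∘ σ)
        = if g = σ then c g else 0 := by
    intro g
    rw [LinearMap.smul_apply, Pi.smul_apply, smul_eq_mul]
    simp only [Bop, LinearMap.coe_mk, AddHom.coe_mk]
    rw [dif_pos (wt_i0_comp n r hnr σ), permOf_i0_comp n r hnr σ]
    simp only [dlt]
    by_cases hg : g = σ
    · rw [if_pos hg, if_pos, mul_one]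
      rw [hg]
      funext k; simp
    · rw [if_neg hg, if_neg, mul_zero]
      intro hc
      apply hg
      have h1 : g⁻¹ * σ = 1 :=
        i0_comp_inj n r hnr (a := g⁻¹ * σ) (b := 1) (by rw [hc]; rfl)
      exact inv_mul_eq_one.mp h1
  rw [Finset.sum_congr rfl fun g _ => hb g,
    Finset.sum_ite_eq' Finset.univ σ c, if_pos (Finset.mem_univ σ)]

lemma Emap_mul (hnr : r ≤ n)
    (x y z : ↥(heckeBimodule K n r (omegaWt n r) (omegaWt n r)))
    (hz : (z : Module.End K (TSp K n r))
      = (x : Module.End K (TSp K n r)) * (y : Module.End K (TSp K n r)))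
    (σ : Equiv.Perm (Fin r)) :
    Emap K n r hnr z σ = ∑ g : Equiv.Perm (Fin r),
      Emap K n r hnr x g * Emap K n r hnr y (g⁻¹ * σ) := by
  show (↑z : Module.End K (TSp K n r)) (dlt K n r hnr) (Fin.castLE hnr ∘ σ) = _
  rw [hz, Module.End.mul_apply]
  rw [key_formula K n r hnr ↑x x.2
    ((↑y : Module.End K (TSp K n r)) (dlt K n r hnr)) _ (wt_i0_comp n r hnr σ)]
  refine Finset.sum_congr rfl fun g _ => ?_
  rw [permOf_i0_comp n r hnr σ]
  rfl

lemma MA_mul_apply {G : Type*} [Group G] [Fintype G] [DecidableEq G]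
    (F H : MonoidAlgebra K G) (σ : G) :
    (F * H).coeff σ = ∑ g : G, F.coeff g * H.coeff (g⁻¹ * σ) := by
  rw [MonoidAlgebra.coeff_mul, Finsupp.sum_fintype]
  · refine Finset.sum_congr rfl fun a _ => ?_
    rw [Finsupp.sum_fintype]
    · rw [Finset.sum_eq_single (a⁻¹ * σ)]
      · rw [if_pos (by group)]
      · intro b _ hb
        rw [if_neg]
        intro hcc
        exact hb (by rw [← hcc]; group)
      · intro habs
        exact absurd (Finset.mem_univ _) habs
    · intro b
      split <;> simp
  · intro a
    rw [Finsupp.sum]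
    apply Finset.sum_eq_zero
    intro b _
    split <;> simp

noncomputable def halfEquiv (hnr : r ≤ n) :
    ↥(heckeBimodule K n r (omegaWt n r) (omegaWt n r))
      ≃ₗ[K] (Equiv.Perm (Fin r) → K) :=
  LinearEquiv.ofLinear (Emap K n r hnr) (Gmap K n r hnr)
    (by apply LinearMap.ext; intro c; exact EG K n r hnr c)
    (by apply LinearMap.ext; intro x; exact GE K n r hnr x)

noncomputable def fullEquiv (hnr : r ≤ n) :
    ↥(heckeBimodule K n r (omegaWt n r) (omegaWt n r))
      ≃ₗ[K] MonoidAlgebra K (Equiv.Perm (Fin r)) :=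
  (halfEquiv K n r hnr).trans
    ((Finsupp.linearEquivFunOnFinite K K (Equiv.Perm (Fin r))).symm.trans
      (MonoidAlgebra.coeffLinearEquiv K).symm)

end Aux

theorem hecke_omega_iso_groupAlgebra (hnr : r ≤ n) :
    ∃ e : ↥(heckeBimodule K n r (omegaWt n r) (omegaWt n r))
            ≃ₗ[K] MonoidAlgebra K (Equiv.Perm (Fin r)),
      (∀ x y z : ↥(heckeBimodule K n r (omegaWt n r) (omegaWt n r)),
        (z : Module.End K (TSp K n r))
            = (x : Module.End K (TSp K n r)) * (y : Module.End K (TSp K n r)) →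
        e z = e x * e y) ∧
      e ⟨proj K n r (omegaWt n r), by
          constructor
          · intro σ
            refine LinearMap.ext fun f => funext fun i => ?_
            simp [proj, placePerm, LinearMap.funLeft, wt_comp]
          · refine LinearMap.ext fun f => funext fun i => ?_
            by_cases h : wt n r i = omegaWt n r <;> simp [proj, h]⟩ = 1 := by
  refine ⟨fullEquiv K n r hnr, ?_, ?_⟩
  · intro x y z hz
    apply MonoidAlgebra.ext
    apply Finsupp.ext
    intro σ
    rw [MA_mul_apply]
    exact Emap_mul K n r hnr x y z hz σ
  · apply MonoidAlgebra.ext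
    apply Finsupp.ext
    intro σ
    rw [MonoidAlgebra.one_def, MonoidAlgebra.single_apply]
    show (if wt n r (Fin.castLE hnr ∘ σ) = omegaWt n r
        then dlt K n r hnr (Fin.castLE hnr ∘ σ) else 0) = _
    rw [if_pos (wt_i0_comp n r hnr σ)]
    simp only [dlt]
    by_cases hσ : σ = 1
    · rw [if_pos, if_pos hσ.symm]
      rw [hσ]
      rfl
    · rw [if_neg, if_neg (fun hh => hσ hh.symm)]
      intro hc
      exact hσ (i0_comp_inj n r hnr (a := σ) (b := 1) (by rw [hc]; rfl))

end SchurPaper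
end

section
/- For λ, μ ∈ Λ(n,r), the number of n×n matrices over ℕ with row sums λ and column sums μ equals the number of pairs (S,T) where S is a semistandard tableau of weight λ and T a semistandard tableau of weight μ, both of the same dominant (partition) shape ν with ν a partition of r into at most n parts. -/
/-!
STATEMENT 6: For `λ, μ ∈ Λ(n,r)`, the number of `n×n` matrices over `ℕ` with row sums `λ`
and column sums `μ` equals the number of pairs `(S,T)` of semistandard tableaux of the same
dominant (partition) shape `ν ⊢ r` with at most `n` parts, where `S` has weight `λ` and `T`
has weight `μ` (entries from `{1,…,n}`; in our 0-based model, entries `< n`, and the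
weight of a tableau counts how often each value occurs among the cells of the shape).
-/


namespace RSK6

/-- max via if, to play well with `split_ifs <;> omega`. -/
def mx (a b : ℕ) : ℕ := if a ≤ b then b else a
def mn (a b : ℕ) : ℕ := if a ≤ b then a else b

/-- `b/a` is a horizontal strip (including containment `a ⊆ b`). -/
def HS (a b : ℕ → ℕ) : Prop := (∀ k, a k ≤ b k) ∧ (∀ k, b (k+1) ≤ a k)

def Anti (f : ℕ → ℕ) : Prop := ∀ k, f (k+1) ≤ f k

def Supp (s : ℕ) (f : ℕ → ℕ) : Prop := ∀ k, s ≤ k → f k = 0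

/-- Forward local growth rule (Krattenthaler). -/
def fwd (r l m : ℕ → ℕ) (x : ℕ) : ℕ → ℕ
  | 0 => mx (l 0) (m 0) + x
  | k+1 => mx (l (k+1)) (m (k+1)) + mn (l k) (m k) - r k

/-- Backward local rule: the partition. -/
def bwdr (v l m : ℕ → ℕ) : ℕ → ℕ :=
  fun k => mn (l k) (m k) + mx (l (k+1)) (m (k+1)) - v (k+1)

/-- Backward local rule: the matrix entry. -/
def bwdx (v l m : ℕ → ℕ) : ℕ := v 0 - mx (l 0) (m 0)

section fwdlemmas
variable {r l m : ℕ → ℕ} {x : ℕ}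
variable (hr : Anti r) (hl : Anti l) (hm : Anti m) (h1 : HS r l) (h2 : HS r m)
include hr hl hm h1 h2

set_option linter.unusedSectionVars false

theorem fwd_anti : Anti (fwd r l m x) := by
  intro k
  match k with
  | 0 =>
    have := h1.2 0; have := h2.2 0; have := h1.1 0; have := h2.1 0
    simp only [fwd, mx, mn]; split_ifs <;> omega
  | k+1 =>
    have := h1.2 k; have := h2.2 k; have := h1.2 (k+1); have := h2.2 (k+1)
    have := h1.1 k; have := h2.1 k; have := h1.1 (k+1); have := h2.1 (k+1)
    have := hl (k+1); have := hm (k+1); have := hl k; have := hm k; have := hr k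
    simp only [fwd, mx, mn]; split_ifs <;> omega

theorem fwd_hs_l : HS l (fwd r l m x) := by
  constructor
  · intro k
    match k with
    | 0 => simp only [fwd, mx, mn]; split_ifs <;> omega
    | k+1 => have := h1.1 k; have := h2.1 k; simp only [fwd, mx, mn]; split_ifs <;> omega
  · intro k
    have := h1.2 k; have := h2.2 k; have := h1.1 k; have := h2.1 k
    simp only [fwd, mx, mn]; split_ifs <;> omega

theorem fwd_hs_m : HS m (fwd r l m x) := by
  constructor
  · intro k
    match k with
    | 0 => simp only [fwd, mx, mn]; split_ifs <;> omega
    | k+1 => have := h1.1 k; have := h2.1 k; simp only [fwd, mx, mn]; split_ifs <;> omega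
  · intro k
    have := h1.2 k; have := h2.2 k; have := h1.1 k; have := h2.1 k
    simp only [fwd, mx, mn]; split_ifs <;> omega

theorem bwdr_fwd : bwdr (fwd r l m x) l m = r := by
  funext k
  have := h1.2 k; have := h2.2 k; have := h1.1 k; have := h2.1 k
  simp only [bwdr, fwd, mx, mn]; split_ifs <;> omega

theorem bwdx_fwd : bwdx (fwd r l m x) l m = x := by
  simp only [bwdx, fwd, mx, mn]; split_ifs <;> omega

theorem fwd_sz {N : ℕ} (hrN : r N = 0) (hlm : mn (l N) (m N) = 0) :
    (∑ k ∈ Finset.range (N+1), fwd r l m x k) + ∑ k ∈ Finset.range (N+1), r k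
      = (∑ k ∈ Finset.range (N+1), l k) + (∑ k ∈ Finset.range (N+1), m k) + x := by
  have key : ∀ k, fwd r l m x (k+1) + r k = mx (l (k+1)) (m (k+1)) + mn (l k) (m k) := by
    intro k
    have := h1.1 k; have := h2.1 k
    simp only [fwd, mx, mn]; split_ifs <;> omega
  have E1 : (∑ k ∈ Finset.range N, fwd r l m x (k+1)) + ∑ k ∈ Finset.range N, r k
      = (∑ k ∈ Finset.range N, mx (l (k+1)) (m (k+1))) + ∑ k ∈ Finset.range N, mn (l k) (m k) := by
    rw [← Finset.sum_add_distrib, ← Finset.sum_add_distrib]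
    exact Finset.sum_congr rfl fun k _ => key k
  have E3 : (∑ k ∈ Finset.range (N+1), l k) + (∑ k ∈ Finset.range (N+1), m k)
      = (∑ k ∈ Finset.range (N+1), mx (l k) (m k)) + ∑ k ∈ Finset.range (N+1), mn (l k) (m k) := by
    rw [← Finset.sum_add_distrib, ← Finset.sum_add_distrib]
    exact Finset.sum_congr rfl fun k _ => by simp only [mx, mn]; split_ifs <;> omega
  have E4 : (∑ k ∈ Finset.range (N+1), mx (l k) (m k))
      = (∑ k ∈ Finset.range N, mx (l (k+1)) (m (k+1))) + mx (l 0) (m 0) :=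
    Finset.sum_range_succ' _ N
  have E5 : (∑ k ∈ Finset.range (N+1), mn (l k) (m k))
      = (∑ k ∈ Finset.range N, mn (l k) (m k)) + mn (l N) (m N) :=
    Finset.sum_range_succ _ N
  have E6 : (∑ k ∈ Finset.range (N+1), fwd r l m x k)
      = (∑ k ∈ Finset.range N, fwd r l m x (k+1)) + fwd r l m x 0 :=
    Finset.sum_range_succ' _ N
  have E7 : (∑ k ∈ Finset.range (N+1), r k) = (∑ k ∈ Finset.range N, r k) + r N :=
    Finset.sum_range_succ _ N
  have E0 : fwd r l m x 0 = mx (l 0) (m 0) + x := rfl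
  omega

end fwdlemmas

section bwdlemmas
variable {v l m : ℕ → ℕ}
variable (hv : Anti v) (hl : Anti l) (hm : Anti m) (h1 : HS l v) (h2 : HS m v)
include hv hl hm h1 h2

set_option linter.unusedSectionVars false

theorem bwdr_anti : Anti (bwdr v l m) := by
  intro k
  have := h1.1 (k+1); have := h2.1 (k+1); have := h1.1 (k+1+1); have := h2.1 (k+1+1)
  have := h1.2 (k+1); have := h2.2 (k+1); have := h1.2 k; have := h2.2 k
  have := hl (k+1); have := hm (k+1); have := hv (k+1); have := hl k; have := hm k
  simp only [bwdr, mx, mn]; split_ifs <;> omega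

theorem bwdr_hs_l : HS (bwdr v l m) l := by
  constructor
  · intro k
    have := h1.1 (k+1); have := h2.1 (k+1); have := h1.2 k; have := h2.2 k
    have := hl k; have := hm k
    simp only [bwdr, mx, mn]; split_ifs <;> omega
  · intro k
    have := h1.1 (k+1); have := h2.1 (k+1); have := h1.2 k; have := h2.2 k
    have := hl k; have := hm k
    simp only [bwdr, mx, mn]; split_ifs <;> omega

theorem bwdr_hs_m : HS (bwdr v l m) m := by
  constructor
  · intro k
    have := h1.1 (k+1); have := h2.1 (k+1); have := h1.2 k; have := h2.2 k
    have := hl k; have := hm k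
    simp only [bwdr, mx, mn]; split_ifs <;> omega
  · intro k
    have := h1.1 (k+1); have := h2.1 (k+1); have := h1.2 k; have := h2.2 k
    have := hl k; have := hm k
    simp only [bwdr, mx, mn]; split_ifs <;> omega

theorem fwd_bwd : fwd (bwdr v l m) l m (bwdx v l m) = v := by
  funext k
  match k with
  | 0 => have := h1.1 0; have := h2.1 0; simp only [fwd, bwdx, mx, mn]; split_ifs <;> omega
  | k+1 =>
    have := h1.1 (k+1); have := h2.1 (k+1); have := h1.2 k; have := h2.2 k
    simp only [fwd, bwdr, mx, mn]; split_ifs <;> omega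

end bwdlemmas

theorem hs_supp {a b : ℕ → ℕ} {s : ℕ} (h : HS a b) (hs : Supp s a) : Supp (s+1) b := by
  intro k hk
  match k, hk with
  | k+1, hk =>
    have := h.2 k
    have := hs k (by omega)
    omega

theorem supp_mono {a : ℕ → ℕ} {s t : ℕ} (h : Supp s a) (hst : s ≤ t) : Supp t a :=
  fun k hk => h k (le_trans hst hk)

/-! ### supplementary local-rule lemmas -/

theorem fwd_supp1 {r l m : ℕ → ℕ} {x a : ℕ} (hl : Supp (a+1) l) (hm : Supp a m) :
    Supp (a+1) (fwd r l m x) := by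
  intro k hk
  match k, hk with
  | k+1, hk =>
    have h1 := hl (k+1) (by omega)
    have h2 := hm (k+1) (by omega)
    have h3 := hm k (by omega)
    simp only [fwd, mx, mn]; split_ifs <;> omega

theorem fwd_supp2 {r l m : ℕ → ℕ} {x a : ℕ} (hl : Supp a l) (hm : Supp (a+1) m) :
    Supp (a+1) (fwd r l m x) := by
  intro k hk
  match k, hk with
  | k+1, hk =>
    have h1 := hl (k+1) (by omega)
    have h2 := hm (k+1) (by omega)
    have h3 := hl k (by omega)
    simp only [fwd, mx, mn]; split_ifs <;> omega

theorem supp_of_le {a b : ℕ → ℕ} {s : ℕ} (h : ∀ k, a k ≤ b k) (hb : Supp s b) : Supp s a :=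
  fun k hk => by have := h k; have := hb k hk; omega

theorem anti_zero : Anti (fun _ => 0) := fun _ => le_refl 0
theorem supp_zero (s : ℕ) : Supp s (fun _ => 0) := fun _ _ => rfl
theorem hs_zero : HS (fun _ => 0) (fun _ => 0) := ⟨fun _ => le_refl 0, fun _ => le_refl 0⟩

/-! ### The growth diagram -/

/-- The Fomin growth diagram of a matrix. -/
def grow (A : ℕ → ℕ → ℕ) : ℕ → ℕ → (ℕ → ℕ)
  | 0, _ => fun _ => 0
  | _+1, 0 => fun _ => 0
  | i+1, j+1 => fwd (grow A i j) (grow A (i+1) j) (grow A i (j+1)) (A i j)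
  termination_by i j => (i, j)

@[simp] theorem grow_zero (A : ℕ → ℕ → ℕ) (j : ℕ) : grow A 0 j = fun _ => 0 := by
  cases j <;> rw [grow]

@[simp] theorem grow_succ_zero (A : ℕ → ℕ → ℕ) (i : ℕ) : grow A (i+1) 0 = fun _ => 0 := by
  rw [grow]

@[simp] theorem grow_zero_right (A : ℕ → ℕ → ℕ) (i : ℕ) : grow A i 0 = fun _ => 0 := by
  cases i <;> simp

theorem hs_zero_of_supp1 {b : ℕ → ℕ} (hb : Supp 1 b) : HS (fun _ => 0) b :=
  ⟨fun _ => Nat.zero_le _, fun k => le_of_eq (hb (k+1) (by omega))⟩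

theorem grow_succ_succ (A : ℕ → ℕ → ℕ) (i j : ℕ) :
    grow A (i+1) (j+1) = fwd (grow A i j) (grow A (i+1) j) (grow A i (j+1)) (A i j) := by
  rw [grow]

/-- All the structural invariants of the growth diagram. -/
theorem grow_master (A : ℕ → ℕ → ℕ) : ∀ s : ℕ,
    (∀ i j, i + j ≤ s + 1 →
      Anti (grow A i j) ∧ Supp i (grow A i j) ∧ Supp j (grow A i j)) ∧
    (∀ i j, i + j ≤ s →
      HS (grow A i j) (grow A i (j+1)) ∧ HS (grow A i j) (grow A (i+1) j)) := by
  intro s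
  induction s using Nat.strong_induction_on with
  | _ s IH =>
  have hQ : ∀ i j, i + j ≤ s + 1 →
      Anti (grow A i j) ∧ Supp i (grow A i j) ∧ Supp j (grow A i j) := by
    intro i j hij
    match i, j with
    | 0, j => simp [anti_zero, supp_zero]
    | i+1, 0 => simp [anti_zero, supp_zero]
    | i+1, j+1 =>
      have hs1 : s - 1 < s := by omega
      have hs0 : i + j ≤ s - 1 := by omega
      obtain ⟨QI, SI⟩ := IH (s-1) hs1
      have q1 := QI i j (by omega)
      have q2 := QI (i+1) j (by omega)
      have q3 := QI i (j+1) (by omega)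
      obtain ⟨sh, sv⟩ := SI i j hs0
      rw [grow_succ_succ]
      refine ⟨fwd_anti q1.1 q2.1 q3.1 sv sh, ?_, ?_⟩
      · exact fwd_supp1 q2.2.1 q3.2.1
      · exact fwd_supp2 q2.2.2 q3.2.2
  refine ⟨hQ, ?_⟩
  intro i j hij
  constructor
  · -- HS (grow A i j) (grow A i (j+1))
    match i with
    | 0 => simpa using hs_zero
    | i+1 =>
      -- grow A (i+1) (j+1) = fwd (grow A i j) (grow A (i+1) j) (grow A i (j+1)) _
      rw [grow_succ_succ]
      match j with
      | 0 =>
        have q3 := hQ i 1 (by omega)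
        simp only [grow_zero_right]
        exact fwd_hs_l anti_zero anti_zero q3.1 hs_zero (hs_zero_of_supp1 q3.2.2)
      | j+1 =>
        have hs1 : s - 1 < s := by omega
        obtain ⟨QI, SI⟩ := IH (s-1) (by omega)
        have q1 := (hQ i (j+1) (by omega)).1
        have q2 := (hQ (i+1) (j+1) (by omega)).1
        have q3 := (hQ i (j+1+1) (by omega)).1
        obtain ⟨sh, sv⟩ := SI i (j+1) (by omega)
        exact fwd_hs_l q1 q2 q3 sv sh
  · -- HS (grow A i j) (grow A (i+1) j)
    match j with
    | 0 => simpa using hs_zero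
    | j+1 =>
      rw [grow_succ_succ]
      match i with
      | 0 =>
        have q2 := hQ 1 j (by omega)
        simp only [grow_zero]
        exact fwd_hs_m anti_zero q2.1 anti_zero (hs_zero_of_supp1 q2.2.1) hs_zero
      | i+1 =>
        obtain ⟨QI, SI⟩ := IH (s-1) (by omega)
        have q1 := (hQ (i+1) j (by omega)).1
        have q2 := (hQ (i+1+1) j (by omega)).1
        have q3 := (hQ (i+1) (j+1) (by omega)).1
        obtain ⟨sh, sv⟩ := SI (i+1) j (by omega)
        exact fwd_hs_m q1 q2 q3 sv sh

theorem grow_anti (A : ℕ → ℕ → ℕ) (i j : ℕ) : Anti (grow A i j) :=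
  ((grow_master A (i+j)).1 i j (by omega)).1

theorem grow_supp1 (A : ℕ → ℕ → ℕ) (i j : ℕ) : Supp i (grow A i j) :=
  ((grow_master A (i+j)).1 i j (by omega)).2.1

theorem grow_supp2 (A : ℕ → ℕ → ℕ) (i j : ℕ) : Supp j (grow A i j) :=
  ((grow_master A (i+j)).1 i j (by omega)).2.2

theorem grow_sh (A : ℕ → ℕ → ℕ) (i j : ℕ) : HS (grow A i j) (grow A i (j+1)) :=
  ((grow_master A (i+j)).2 i j (by omega)).1

theorem grow_sv (A : ℕ → ℕ → ℕ) (i j : ℕ) : HS (grow A i j) (grow A (i+1) j) :=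
  ((grow_master A (i+j)).2 i j (by omega)).2


/-! ### sizes -/

/-- Size of a partition, summed over the first `n+1` parts. -/
def sz (n : ℕ) (f : ℕ → ℕ) : ℕ := ∑ k ∈ Finset.range (n+1), f k

theorem sz_zero (n : ℕ) : sz n (fun _ => 0) = 0 := by simp [sz]

theorem grow_sz_row (A : ℕ → ℕ → ℕ) (n i : ℕ) :
    ∀ J, J ≤ n → (∑ j ∈ Finset.range J, A i j) + sz n (grow A i J) = sz n (grow A (i+1) J) := by
  intro J
  induction J with
  | zero => intro _; simp [sz]
  | succ J IHJ =>
    intro hJ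
    have IH := IHJ (by omega)
    have key := fwd_sz (r := grow A i J) (l := grow A (i+1) J) (m := grow A i (J+1))
      (x := A i J) (N := n)
      (grow_anti A i J) (grow_anti A (i+1) J) (grow_anti A i (J+1))
      (grow_sv A i J) (grow_sh A i J)
      (grow_supp2 A i J n (by omega))
      (by have := grow_supp2 A (i+1) J n (by omega); simp only [mn]; split_ifs <;> omega)
    rw [← grow_succ_succ] at key
    rw [Finset.sum_range_succ]
    simp only [sz] at *
    omega

theorem grow_sz_col (A : ℕ → ℕ → ℕ) (n j : ℕ) :
    ∀ I, I ≤ n → (∑ i ∈ Finset.range I, A i j) + sz n (grow A I j) = sz n (grow A I (j+1)) := by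
  intro I
  induction I with
  | zero => intro _; simp [sz]
  | succ I IHI =>
    intro hI
    have IH := IHI (by omega)
    have key := fwd_sz (r := grow A I j) (l := grow A (I+1) j) (m := grow A I (j+1))
      (x := A I j) (N := n)
      (grow_anti A I j) (grow_anti A (I+1) j) (grow_anti A I (j+1))
      (grow_sv A I j) (grow_sh A I j)
      (grow_supp1 A I j n (by omega))
      (by have := grow_supp1 A I (j+1) n (by omega); simp only [mn]; split_ifs <;> omega)
    rw [← grow_succ_succ] at key
    rw [Finset.sum_range_succ]
    simp only [sz] at *
    omega

/-! ### the backward (shrinking) diagram -/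

/-- Reconstruction of the growth diagram from its outer boundary chains.
`shrink c d n p q` should be thought of as the partition at grid point `(n-p, n-q)`. -/
def shrink (c d : ℕ → ℕ → ℕ) (n : ℕ) : ℕ → ℕ → (ℕ → ℕ)
  | 0, q => d (n - q)
  | p+1, 0 => c (n - (p+1))
  | p+1, q+1 => bwdr (shrink c d n p q) (shrink c d n p (q+1)) (shrink c d n (p+1) q)
  termination_by p q => (p, q)

@[simp] theorem shrink_zero (c d : ℕ → ℕ → ℕ) (n q : ℕ) : shrink c d n 0 q = d (n - q) := by
  cases q <;> rw [shrink]

@[simp] theorem shrink_succ_zero (c d : ℕ → ℕ → ℕ) (n p : ℕ) :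
    shrink c d n (p+1) 0 = c (n - (p+1)) := by rw [shrink]

theorem shrink_succ_succ (c d : ℕ → ℕ → ℕ) (n p q : ℕ) :
    shrink c d n (p+1) (q+1)
      = bwdr (shrink c d n p q) (shrink c d n p (q+1)) (shrink c d n (p+1) q) := by
  rw [shrink]

/-- A GT-like chain of partitions with horizontal strips, step sizes `w`, clamped above `n`. -/
structure Chain (n : ℕ) (w : ℕ → ℕ) (c : ℕ → ℕ → ℕ) : Prop where
  zero : c 0 = fun _ => 0
  anti : ∀ i, Anti (c i)
  supp : ∀ i, Supp i (c i)
  hs : ∀ i, i < n → HS (c i) (c (i+1))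
  size : ∀ i, i < n → sz n (c (i+1)) = sz n (c i) + w i
  clamp : ∀ i, n ≤ i → c i = c n


section ShrinkMaster

variable {c d : ℕ → ℕ → ℕ} {n : ℕ} {w1 w2 : ℕ → ℕ}
variable (hc : Chain n w1 c) (hd : Chain n w2 d) (hcd : c n = d n)
include hc hd hcd

set_option linter.unusedSectionVars false

theorem shrink_master : ∀ s : ℕ,
    (∀ p q, p ≤ n → q ≤ n → p + q ≤ s + 1 →
      Anti (shrink c d n p q) ∧ Supp (n-p) (shrink c d n p q) ∧ Supp (n-q) (shrink c d n p q)) ∧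
    (∀ p q, p ≤ n → q + 1 ≤ n → p + q ≤ s →
      HS (shrink c d n p (q+1)) (shrink c d n p q)) ∧
    (∀ p q, p + 1 ≤ n → q ≤ n → p + q ≤ s →
      HS (shrink c d n (p+1) q) (shrink c d n p q)) := by
  intro s
  induction s using Nat.strong_induction_on with
  | _ s IH =>
  have hQ : ∀ p q, p ≤ n → q ≤ n → p + q ≤ s + 1 →
      Anti (shrink c d n p q) ∧ Supp (n-p) (shrink c d n p q) ∧ Supp (n-q) (shrink c d n p q) := by
    intro p q hp hq hpq
    match p, q with
    | 0, q =>
      simp only [shrink_zero]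
      refine ⟨hd.anti _, ?_, hd.supp _⟩
      exact supp_mono (hd.supp _) (by omega)
    | p+1, 0 =>
      simp only [shrink_succ_zero]
      refine ⟨hc.anti _, hc.supp _, ?_⟩
      exact supp_mono (hc.supp _) (by omega)
    | p+1, q+1 =>
      obtain ⟨QI, SHI, SVI⟩ := IH (s-1) (by omega)
      have q1 := QI p q (by omega) (by omega) (by omega)
      have q2 := QI p (q+1) (by omega) (by omega) (by omega)
      have q3 := QI (p+1) q (by omega) (by omega) (by omega)
      have sh := SHI p q (by omega) (by omega) (by omega)
      have sv := SVI p q (by omega) (by omega) (by omega)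
      rw [shrink_succ_succ]
      refine ⟨bwdr_anti q1.1 q2.1 q3.1 sh sv, ?_, ?_⟩
      · exact supp_of_le (bwdr_hs_m q1.1 q2.1 q3.1 sh sv).1 q3.2.1
      · exact supp_of_le (bwdr_hs_l q1.1 q2.1 q3.1 sh sv).1 q2.2.2
  refine ⟨hQ, ?_, ?_⟩
  · -- Sh
    intro p q hp hq hpq
    match p with
    | 0 =>
      simp only [shrink_zero]
      have harith : n - q = (n - (q+1)) + 1 := by omega
      rw [harith]
      exact hd.hs _ (by omega)
    | p+1 =>
      obtain ⟨QI, SHI, SVI⟩ := IH (s-1) (by omega)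
      have q1 := (hQ p q (by omega) (by omega) (by omega)).1
      have q2 := (hQ p (q+1) (by omega) (by omega) (by omega)).1
      have q3 := (hQ (p+1) q (by omega) (by omega) (by omega)).1
      have sh := SHI p q (by omega) (by omega) (by omega)
      have sv := SVI p q (by omega) (by omega) (by omega)
      rw [shrink_succ_succ]
      exact bwdr_hs_m q1 q2 q3 sh sv
  · -- Sv
    intro p q hp hq hpq
    match q with
    | 0 =>
      simp only [shrink_succ_zero]
      match p with
      | 0 =>
        simp only [shrink_zero, Nat.sub_zero, ← hcd]
        have harith : n = (n - 1) + 1 := by omega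
        rw [harith]
        exact hc.hs _ (by omega)
      | p+1 =>
        simp only [shrink_succ_zero]
        have harith : n - (p+1) = (n - (p+1+1)) + 1 := by omega
        rw [harith]
        exact hc.hs _ (by omega)
    | q+1 =>
      obtain ⟨QI, SHI, SVI⟩ := IH (s-1) (by omega)
      have q1 := (hQ p q (by omega) (by omega) (by omega)).1
      have q2 := (hQ p (q+1) (by omega) (by omega) (by omega)).1
      have q3 := (hQ (p+1) q (by omega) (by omega) (by omega)).1
      have sh := SHI p q (by omega) (by omega) (by omega)
      have sv := SVI p q (by omega) (by omega) (by omega)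
      rw [shrink_succ_succ]
      exact bwdr_hs_l q1 q2 q3 sh sv

theorem shrink_anti {p q : ℕ} (hp : p ≤ n) (hq : q ≤ n) : Anti (shrink c d n p q) :=
  ((shrink_master hc hd hcd (p+q)).1 p q hp hq (by omega)).1

theorem shrink_sh {p q : ℕ} (hp : p ≤ n) (hq : q + 1 ≤ n) :
    HS (shrink c d n p (q+1)) (shrink c d n p q) :=
  ((shrink_master hc hd hcd (p+q)).2.1 p q hp hq (by omega))

theorem shrink_sv {p q : ℕ} (hp : p + 1 ≤ n) (hq : q ≤ n) :
    HS (shrink c d n (p+1) q) (shrink c d n p q) :=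
  ((shrink_master hc hd hcd (p+q)).2.2 p q hp hq (by omega))

end ShrinkMaster


/-! ### round trip 1 : matrix → chains → matrix -/

/-- The boundary chain of the growth diagram along the right edge (indexed by rows). -/
def rowChain (A : ℕ → ℕ → ℕ) (n : ℕ) : ℕ → ℕ → ℕ := fun i => grow A (min i n) n

/-- The boundary chain of the growth diagram along the bottom edge (indexed by columns). -/
def colChain (A : ℕ → ℕ → ℕ) (n : ℕ) : ℕ → ℕ → ℕ := fun j => grow A n (min j n)

/-- The matrix reconstructed from a pair of chains. -/
def bwdA (c d : ℕ → ℕ → ℕ) (n : ℕ) (i j : ℕ) : ℕ :=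
  if i < n ∧ j < n then
    bwdx (shrink c d n (n-i-1) (n-j-1)) (shrink c d n (n-i-1) (n-j)) (shrink c d n (n-i) (n-j-1))
  else 0

theorem shrink_grow (A : ℕ → ℕ → ℕ) (n : ℕ) :
    ∀ p q, p ≤ n → q ≤ n →
      shrink (rowChain A n) (colChain A n) n p q = grow A (n-p) (n-q) := by
  intro p
  induction p with
  | zero =>
    intro q hp hq
    simp only [shrink_zero, colChain, Nat.sub_zero]
    rw [min_eq_left (by omega)]
  | succ p IHp =>
    intro q
    induction q with
    | zero =>
      intro hp hq
      simp only [shrink_succ_zero, rowChain, Nat.sub_zero]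
      rw [min_eq_left (by omega)]
    | succ q IHq =>
      intro hp hq
      rw [shrink_succ_succ, IHp q (by omega) (by omega), IHp (q+1) (by omega) (by omega),
        IHq (by omega) (by omega)]
      obtain ⟨i, hi⟩ : ∃ i, n - (p+1) = i := ⟨_, rfl⟩
      obtain ⟨j, hj⟩ : ∃ j, n - (q+1) = j := ⟨_, rfl⟩
      have e1 : n - p = i + 1 := by omega
      have e2 : n - q = j + 1 := by omega
      rw [e1, e2, hi, hj, grow_succ_succ]
      exact bwdr_fwd (grow_anti A i j) (grow_anti A (i+1) j) (grow_anti A i (j+1))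
        (grow_sv A i j) (grow_sh A i j)

theorem bwdA_grow (A : ℕ → ℕ → ℕ) (n : ℕ) {i j : ℕ} (hi : i < n) (hj : j < n) :
    bwdA (rowChain A n) (colChain A n) n i j = A i j := by
  rw [bwdA, if_pos ⟨hi, hj⟩,
    shrink_grow A n (n-i-1) (n-j-1) (by omega) (by omega),
    shrink_grow A n (n-i-1) (n-j) (by omega) (by omega),
    shrink_grow A n (n-i) (n-j-1) (by omega) (by omega)]
  have e1 : n - (n-i-1) = i + 1 := by omega
  have e2 : n - (n-j-1) = j + 1 := by omega
  have e3 : n - (n-i) = i := by omega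
  have e4 : n - (n-j) = j := by omega
  rw [e1, e2, e3, e4, grow_succ_succ]
  exact bwdx_fwd (grow_anti A i j) (grow_anti A (i+1) j) (grow_anti A i (j+1))
    (grow_sv A i j) (grow_sh A i j)

/-! ### round trip 2 : chains → matrix → chains -/

section RT2

variable {c d : ℕ → ℕ → ℕ} {n : ℕ} {w1 w2 : ℕ → ℕ}
variable (hc : Chain n w1 c) (hd : Chain n w2 d) (hcd : c n = d n)
include hc hd hcd

set_option linter.unusedSectionVars false

theorem shrink_bottom : ∀ q, q ≤ n → shrink c d n n q = fun _ => 0 := by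
  intro q
  induction q with
  | zero =>
    intro _
    match n with
    | 0 => simpa using hd.zero
    | p+1 => simp [hc.zero]
  | succ q IHq =>
    intro hq
    have h0 := IHq (by omega)
    match n, hq with
    | p+1, hq =>
      rw [shrink_succ_succ]
      funext k
      have hle := (bwdr_hs_m (shrink_anti (p := p) (q := q) hc hd hcd (by omega) (by omega))
        (shrink_anti (p := p) (q := q+1) hc hd hcd (by omega) (by omega))
        (shrink_anti (p := p+1) (q := q) hc hd hcd (by omega) (by omega))
        (shrink_sh (p := p) (q := q) hc hd hcd (by omega) (by omega))
        (shrink_sv (p := p) (q := q) hc hd hcd (by omega) (by omega))).1 k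
      rw [h0] at hle ⊢
      simpa using hle

theorem shrink_right : ∀ p, p ≤ n → shrink c d n p n = fun _ => 0 := by
  intro p
  induction p with
  | zero =>
    intro _
    simpa using hd.zero
  | succ p IHp =>
    intro hp
    have h0 := IHp (by omega)
    match n, hp with
    | q+1, hp =>
      rw [shrink_succ_succ]
      funext k
      have hle := (bwdr_hs_l (shrink_anti (p := p) (q := q) hc hd hcd (by omega) (by omega))
        (shrink_anti (p := p) (q := q+1) hc hd hcd (by omega) (by omega))
        (shrink_anti (p := p+1) (q := q) hc hd hcd (by omega) (by omega))
        (shrink_sh (p := p) (q := q) hc hd hcd (by omega) (by omega))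
        (shrink_sv (p := p) (q := q) hc hd hcd (by omega) (by omega))).1 k
      rw [h0] at hle ⊢
      simpa using hle

theorem grow_shrink : ∀ i j, i ≤ n → j ≤ n →
    grow (bwdA c d n) i j = shrink c d n (n-i) (n-j) := by
  intro i
  induction i with
  | zero =>
    intro j hi hj
    rw [grow_zero, Nat.sub_zero, shrink_bottom hc hd hcd (n-j) (by omega)]
  | succ i IHi =>
    intro j
    induction j with
    | zero =>
      intro hi hj
      rw [grow_zero_right, Nat.sub_zero, shrink_right hc hd hcd (n-(i+1)) (by omega)]
    | succ j IHj =>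
      intro hi hj
      rw [grow_succ_succ, IHi j (by omega) (by omega), IHi (j+1) (by omega) (by omega),
        IHj (by omega) (by omega)]
      have hbA : bwdA c d n i j
          = bwdx (shrink c d n (n-i-1) (n-j-1)) (shrink c d n (n-i-1) (n-j))
              (shrink c d n (n-i) (n-j-1)) := by
        rw [bwdA, if_pos ⟨by omega, by omega⟩]
      obtain ⟨p, hp⟩ : ∃ p, n - (i+1) = p := ⟨_, rfl⟩
      obtain ⟨q, hq⟩ : ∃ q, n - (j+1) = q := ⟨_, rfl⟩
      have e1 : n - i = p + 1 := by omega
      have e2 : n - j = q + 1 := by omega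
      have e3 : n - i - 1 = p := by omega
      have e4 : n - j - 1 = q := by omega
      rw [hbA, e3, e4, e1, e2, hp, hq, shrink_succ_succ]
      exact fwd_bwd (shrink_anti (p := p) (q := q) hc hd hcd (by omega) (by omega))
        (shrink_anti (p := p) (q := q+1) hc hd hcd (by omega) (by omega))
        (shrink_anti (p := p+1) (q := q) hc hd hcd (by omega) (by omega))
        (shrink_sh (p := p) (q := q) hc hd hcd (by omega) (by omega))
        (shrink_sv (p := p) (q := q) hc hd hcd (by omega) (by omega))

end RT2


/-! ### equivalence between matrices and chain pairs -/

def ext (n : ℕ) (w : Fin n → ℕ) : ℕ → ℕ := fun i => if h : i < n then w ⟨i, h⟩ else 0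

def extM (n : ℕ) (A : Matrix (Fin n) (Fin n) ℕ) : ℕ → ℕ → ℕ :=
  fun i j => if h : i < n ∧ j < n then A ⟨i, h.1⟩ ⟨j, h.2⟩ else 0

theorem sum_extM_row {n : ℕ} (A : Matrix (Fin n) (Fin n) ℕ) {i : ℕ} (hi : i < n) :
    ∑ j ∈ Finset.range n, extM n A i j = ∑ j, A ⟨i, hi⟩ j := by
  rw [← Fin.sum_univ_eq_sum_range (fun j => extM n A i j) n]
  refine Finset.sum_congr rfl fun j _ => ?_
  simp [extM, hi, j.isLt]

theorem sum_extM_col {n : ℕ} (A : Matrix (Fin n) (Fin n) ℕ) {j : ℕ} (hj : j < n) :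
    ∑ i ∈ Finset.range n, extM n A i j = ∑ i, A i ⟨j, hj⟩ := by
  rw [← Fin.sum_univ_eq_sum_range (fun i => extM n A i j) n]
  refine Finset.sum_congr rfl fun i _ => ?_
  simp [extM, hj, i.isLt]

theorem rowChain_chain {n : ℕ} {lam : Fin n → ℕ} {A : Matrix (Fin n) (Fin n) ℕ}
    (hA : ∀ i, ∑ j, A i j = lam i) : Chain n (ext n lam) (rowChain (extM n A) n) := by
  constructor
  · simp [rowChain]
  · intro i; exact grow_anti _ _ _
  · intro i; exact supp_mono (grow_supp1 _ _ _) (by omega)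
  · intro i hi
    unfold rowChain
    rw [min_eq_left (by omega : i ≤ n), min_eq_left (by omega : i + 1 ≤ n)]
    exact grow_sv _ _ _
  · intro i hi
    unfold rowChain
    rw [min_eq_left (by omega : i ≤ n), min_eq_left (by omega : i + 1 ≤ n)]
    have key := grow_sz_row (extM n A) n i n (le_refl n)
    rw [sum_extM_row A hi, hA ⟨i, hi⟩] at key
    have he : ext n lam i = lam ⟨i, hi⟩ := by simp [ext, hi]
    omega
  · intro i hi
    unfold rowChain
    rw [min_eq_left (le_refl n), min_eq_right (by omega : n ≤ i)]

theorem colChain_chain {n : ℕ} {mu : Fin n → ℕ} {A : Matrix (Fin n) (Fin n) ℕ}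
    (hA : ∀ j, ∑ i, A i j = mu j) : Chain n (ext n mu) (colChain (extM n A) n) := by
  constructor
  · simp [colChain]
  · intro i; exact grow_anti _ _ _
  · intro i; exact supp_mono (grow_supp2 _ _ _) (by omega)
  · intro j hj
    unfold colChain
    rw [min_eq_left (by omega : j ≤ n), min_eq_left (by omega : j + 1 ≤ n)]
    exact grow_sh _ _ _
  · intro j hj
    unfold colChain
    rw [min_eq_left (by omega : j ≤ n), min_eq_left (by omega : j + 1 ≤ n)]
    have key := grow_sz_col (extM n A) n j n (le_refl n)
    rw [sum_extM_col A hj, hA ⟨j, hj⟩] at key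
    have he : ext n mu j = mu ⟨j, hj⟩ := by simp [ext, hj]
    omega
  · intro j hj
    unfold colChain
    rw [min_eq_left (le_refl n), min_eq_right (by omega : n ≤ j)]

section BA

variable {c d : ℕ → ℕ → ℕ} {n : ℕ} {w1 w2 : ℕ → ℕ}
variable (hc : Chain n w1 c) (hd : Chain n w2 d) (hcd : c n = d n)
include hc hd hcd

set_option linter.unusedSectionVars false

theorem grow_bwdA_row {i : ℕ} (hi : i ≤ n) : grow (bwdA c d n) i n = c i := by
  rw [grow_shrink hc hd hcd i n hi (le_refl n), Nat.sub_self]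
  by_cases hin : i = n
  · have h : n - i = 0 := by omega
    rw [h, shrink_zero, Nat.sub_zero, ← hcd, hin]
  · have h : n - i = (n - i - 1) + 1 := by omega
    rw [h, shrink_succ_zero]
    have h2 : n - (n - i - 1 + 1) = i := by omega
    rw [h2]

theorem grow_bwdA_col {j : ℕ} (hj : j ≤ n) : grow (bwdA c d n) n j = d j := by
  rw [grow_shrink hc hd hcd n j (le_refl n) hj, Nat.sub_self, shrink_zero]
  have h2 : n - (n - j) = j := by omega
  rw [h2]

theorem rowChain_bwdA : rowChain (bwdA c d n) n = c := by
  funext i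
  unfold rowChain
  by_cases hi : i ≤ n
  · rw [min_eq_left hi]; exact grow_bwdA_row hc hd hcd hi
  · rw [min_eq_right (by omega), grow_bwdA_row hc hd hcd (le_refl n), hc.clamp i (by omega)]

theorem colChain_bwdA : colChain (bwdA c d n) n = d := by
  funext j
  unfold colChain
  by_cases hj : j ≤ n
  · rw [min_eq_left hj]; exact grow_bwdA_col hc hd hcd hj
  · rw [min_eq_right (by omega), grow_bwdA_col hc hd hcd (le_refl n), hd.clamp j (by omega)]

theorem bwdA_rowsum {i : ℕ} (hi : i < n) :
    ∑ j ∈ Finset.range n, bwdA c d n i j = w1 i := by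
  have key := grow_sz_row (bwdA c d n) n i n (le_refl n)
  rw [grow_bwdA_row hc hd hcd (by omega : i ≤ n),
    grow_bwdA_row hc hd hcd (by omega : i + 1 ≤ n)] at key
  have hsz := hc.size i hi
  omega

theorem bwdA_colsum {j : ℕ} (hj : j < n) :
    ∑ i ∈ Finset.range n, bwdA c d n i j = w2 j := by
  have key := grow_sz_col (bwdA c d n) n j n (le_refl n)
  rw [grow_bwdA_col hc hd hcd (by omega : j ≤ n),
    grow_bwdA_col hc hd hcd (by omega : j + 1 ≤ n)] at key
  have hsz := hd.size j hj
  omega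

end BA

theorem extM_bwdA {n : ℕ} (c d : ℕ → ℕ → ℕ) :
    extM n (Matrix.of fun (i j : Fin n) => bwdA c d n i j) = bwdA c d n := by
  funext i j
  by_cases h : i < n ∧ j < n
  · simp [extM, h.1, h.2]
  · rw [extM]
    simp only [dif_neg h]
    rw [bwdA, if_neg h]

/-- The RSK growth-diagram equivalence between matrices with prescribed row/column sums
and pairs of chains. -/
def matChainEquiv (n : ℕ) (lam mu : Fin n → ℕ) :
    {A : Matrix (Fin n) (Fin n) ℕ //
        (∀ i, ∑ j, A i j = lam i) ∧ (∀ j, ∑ i, A i j = mu j)} ≃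
    {cd : (ℕ → ℕ → ℕ) × (ℕ → ℕ → ℕ) //
        Chain n (ext n lam) cd.1 ∧ Chain n (ext n mu) cd.2 ∧ cd.1 n = cd.2 n} where
  toFun := fun ⟨A, hA1, hA2⟩ =>
    ⟨(rowChain (extM n A) n, colChain (extM n A) n),
      rowChain_chain hA1, colChain_chain hA2, by simp [rowChain, colChain]⟩
  invFun := fun ⟨(c, d), hc, hd, hcd⟩ =>
    ⟨Matrix.of fun (i j : Fin n) => bwdA c d n i j,
      fun i => by
        have := bwdA_rowsum hc hd hcd i.isLt
        rw [← Fin.sum_univ_eq_sum_range (fun j => bwdA c d n (↑i) j) n] at this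
        have he : ext n lam ↑i = lam i := by simp [ext, i.isLt]
        rw [he] at this
        simpa using this,
      fun j => by
        have := bwdA_colsum hc hd hcd j.isLt
        rw [← Fin.sum_univ_eq_sum_range (fun i => bwdA c d n i (↑j)) n] at this
        have he : ext n mu ↑j = mu j := by simp [ext, j.isLt]
        rw [he] at this
        simpa using this⟩
  left_inv := fun ⟨A, hA1, hA2⟩ => by
    apply Subtype.ext
    funext i j
    simp only [Matrix.of_apply]
    have := bwdA_grow (extM n A) n i.isLt j.isLt
    rw [this]
    simp [extM, i.isLt, j.isLt]
  right_inv := fun ⟨(c, d), hc, hd, hcd⟩ => by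
    apply Subtype.ext
    simp only
    rw [extM_bwdA]
    exact Prod.ext (rowChain_bwdA hc hd hcd) (colChain_bwdA hc hd hcd)


/-! ### glue with `YoungDiagram` -/

theorem anti_mono {f : ℕ → ℕ} (hf : Anti f) : ∀ {a b : ℕ}, a ≤ b → f b ≤ f a := by
  intro a b hab
  induction hab with
  | refl => exact le_refl _
  | step _ IH => exact le_trans (hf _) IH

theorem nat_le_of_lt_imp {a b : ℕ} (h : ∀ j, j < a → j < b) : a ≤ b := by
  by_contra hab
  have := h b (by omega)
  omega

theorem nat_eq_of_lt_iff {a b : ℕ} (h : ∀ j, j < a ↔ j < b) : a = b := by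
  have h1 := h a
  have h2 := h b
  omega

/-- The Young diagram of a partition function. -/
def toYD (n : ℕ) (f : ℕ → ℕ) (hf : Anti f) (hs : Supp n f) : YoungDiagram where
  cells := (Finset.range n ×ˢ Finset.range (f 0)).filter (fun c => c.2 < f c.1)
  isLowerSet := by
    rintro ⟨i2, j2⟩ ⟨i1, j1⟩ ⟨(hi : i1 ≤ i2), (hj : j1 ≤ j2)⟩ hmem
    simp only [Finset.coe_filter, Set.mem_setOf_eq, Finset.mem_product, Finset.mem_range] at *
    have h2 := anti_mono hf hi
    refine ⟨⟨?_, ?_⟩, ?_⟩ <;> omega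

theorem mem_toYD {n : ℕ} {f : ℕ → ℕ} {hf : Anti f} {hs : Supp n f} {i j : ℕ} :
    (i, j) ∈ toYD n f hf hs ↔ j < f i := by
  show (i, j) ∈ (toYD n f hf hs).cells ↔ _
  simp only [toYD, Finset.mem_filter, Finset.mem_product, Finset.mem_range]
  constructor
  · rintro ⟨_, h⟩; exact h
  · intro h
    have h1 : i < n := by
      by_contra hn
      have := hs i (by omega)
      omega
    have h2 := anti_mono hf (Nat.zero_le i)
    exact ⟨⟨h1, by omega⟩, h⟩

theorem rowLen_toYD {n : ℕ} {f : ℕ → ℕ} {hf : Anti f} {hs : Supp n f} (i : ℕ) :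
    (toYD n f hf hs).rowLen i = f i := by
  apply nat_eq_of_lt_iff
  intro j
  rw [← YoungDiagram.mem_iff_lt_rowLen, mem_toYD]

theorem colLen_le {μ : YoungDiagram} {n : ℕ} (h : ∀ i, n ≤ i → μ.rowLen i = 0) :
    μ.colLen 0 ≤ n := by
  by_contra hn
  have hmem : (n, 0) ∈ μ := YoungDiagram.mem_iff_lt_colLen.mpr (by omega)
  rw [YoungDiagram.mem_iff_lt_rowLen, h n (le_refl n)] at hmem
  omega

/-- Decompose the cells of a Young diagram with at most `N` rows into rows. -/
theorem cells_eq_biUnion {μ : YoungDiagram} {N : ℕ} (h : μ.colLen 0 ≤ N) :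
    μ.cells = (Finset.range N).biUnion
      (fun i => {i} ×ˢ Finset.range (μ.rowLen i)) := by
  ext ⟨i, j⟩
  simp only [Finset.mem_biUnion, Finset.mem_range, Finset.mem_product, Finset.mem_singleton]
  constructor
  · intro hmem
    have h1 : i < μ.colLen j :=
      YoungDiagram.mem_iff_lt_colLen.mp ((YoungDiagram.mem_cells _).mp hmem)
    have h2 : μ.colLen j ≤ μ.colLen 0 := μ.colLen_anti 0 j (Nat.zero_le j)
    have h3 : j < μ.rowLen i :=
      YoungDiagram.mem_iff_lt_rowLen.mp ((YoungDiagram.mem_cells _).mp hmem)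
    exact ⟨i, by omega, rfl, h3⟩
  · rintro ⟨i', hi', rfl, hj⟩
    exact (YoungDiagram.mem_cells _).mpr (YoungDiagram.mem_iff_lt_rowLen.mpr hj)

theorem card_filter_cells {μ : YoungDiagram} {N : ℕ} (h : μ.colLen 0 ≤ N)
    (P : ℕ → ℕ → Prop) [∀ i j, Decidable (P i j)] :
    (μ.cells.filter (fun c => P c.1 c.2)).card
      = ∑ i ∈ Finset.range N, ((Finset.range (μ.rowLen i)).filter (fun j => P i j)).card := by
  rw [cells_eq_biUnion h, Finset.filter_biUnion, Finset.card_biUnion]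
  · refine Finset.sum_congr rfl fun i _ => ?_
    rw [Finset.singleton_product, Finset.filter_map, Finset.card_map]
    rfl
  · intro a _ b _ hab
    simp only [Finset.disjoint_left]
    rintro ⟨x, y⟩ hx hy
    simp only [Finset.mem_filter, Finset.singleton_product, Finset.mem_map,
      Function.Embedding.coeFn_mk] at hx hy
    obtain ⟨⟨ya, _, heqa⟩, _⟩ := hx
    obtain ⟨⟨yb, _, heqb⟩, _⟩ := hy
    apply hab
    have h1 := congrArg Prod.fst heqa
    have h2 := congrArg Prod.fst heqb
    simp only at h1 h2
    omega

theorem card_cells {μ : YoungDiagram} {N : ℕ} (h : μ.colLen 0 ≤ N) :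
    μ.card = ∑ i ∈ Finset.range N, μ.rowLen i := by
  have := card_filter_cells h (fun _ _ => True)
  simpa using this


theorem down_closed_eq_range (S : Finset ℕ) (h : ∀ a b, a ≤ b → b ∈ S → a ∈ S) :
    S = Finset.range S.card := by
  have key : ∀ x, x ∈ S ↔ x < S.card := by
    intro x
    constructor
    · intro hx
      have hsub : Finset.range (x+1) ⊆ S := by
        intro a ha
        exact h a x (by simpa using Nat.lt_succ_iff.mp (Finset.mem_range.mp ha)) hx
      have := Finset.card_le_card hsub
      simpa using this
    · intro hx
      by_contra hxS
      have hsub : S ⊆ Finset.range x := by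
        intro b hb
        rcases Nat.lt_or_ge b x with hbx | hbx
        · simpa using hbx
        · exact absurd (h x b hbx hb) hxS
      have := Finset.card_le_card hsub
      simp at this
      omega
  ext x
  rw [key, Finset.mem_range]

section ChainLemmas

variable {n : ℕ} {w : ℕ → ℕ} {c : ℕ → ℕ → ℕ} (hc : Chain n w c)
include hc

set_option linter.unusedSectionVars false

theorem chain_step_le (t : ℕ) : ∀ k, c t k ≤ c (t+1) k := by
  intro k
  rcases Nat.lt_or_ge t n with h | h
  · exact (hc.hs t h).1 k
  · rw [hc.clamp t h, hc.clamp (t+1) (by omega)]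

theorem chain_le {s t : ℕ} (hst : s ≤ t) : ∀ k, c s k ≤ c t k := by
  intro k
  induction hst with
  | refl => exact le_refl _
  | step _ IH => exact le_trans IH (chain_step_le hc _ k)

theorem chain_strip (t : ℕ) : ∀ k, c (t+1) (k+1) ≤ c t k := by
  intro k
  rcases Nat.lt_or_ge t n with h | h
  · exact (hc.hs t h).2 k
  · rw [hc.clamp t h, hc.clamp (t+1) (by omega)]
    exact hc.anti n k

theorem chain_total : ∀ I, I ≤ n → sz n (c I) = ∑ i ∈ Finset.range I, w i := by
  intro I
  induction I with
  | zero =>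
    intro _
    rw [hc.zero, sz_zero]
    simp
  | succ I IH =>
    intro hI
    rw [Finset.sum_range_succ, ← IH (by omega), hc.size I (by omega)]

theorem exists_strip {i j : ℕ} (hcell : j < c n i) :
    ∃ v, v < n ∧ c v i ≤ j ∧ j < c (v+1) i := by
  have hP : ∃ t, j < c t i := ⟨n, hcell⟩
  set t0 := Nat.find hP with ht0
  have hspec : j < c t0 i := Nat.find_spec hP
  have ht0n : t0 ≤ n := Nat.find_le hcell
  have ht0pos : 1 ≤ t0 := by
    rcases Nat.eq_zero_or_pos t0 with h | h
    · exfalso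
      rw [h] at hspec
      have := congrFun (hc.zero) i
      omega
    · omega
  refine ⟨t0 - 1, ?_, ?_, ?_⟩
  · -- t0 - 1 < n : need t0 ≤ n; if t0 = n need t0-1 < n i.e. n ≥ 1
    omega
  · have := Nat.find_min hP (m := t0 - 1) (by omega)
    omega
  · have : t0 - 1 + 1 = t0 := by omega
    rw [this]
    exact hspec

/-- The entry function of the tableau associated to a chain. -/
def chainEntry (c : ℕ → ℕ → ℕ) (n : ℕ) : ℕ → ℕ → ℕ := fun i j =>
  if j < c n i then ((Finset.range n).filter (fun t => c (t+1) i ≤ j)).card else 0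

theorem chainEntry_eq {i j v : ℕ} (hcell : j < c n i) (hvn : v ≤ n)
    (hv1 : c v i ≤ j) (hv2 : j < c (v+1) i) : chainEntry c n i j = v := by
  rw [chainEntry, if_pos hcell]
  have hset : (Finset.range n).filter (fun t => c (t+1) i ≤ j) = Finset.range v := by
    ext t
    simp only [Finset.mem_filter, Finset.mem_range]
    constructor
    · rintro ⟨htn, hle⟩
      by_contra htv
      have hmono := chain_le hc (show v + 1 ≤ t + 1 by omega) i
      omega
    · intro htv
      have hmono := chain_le hc (show t + 1 ≤ v by omega) i
      exact ⟨by omega, by omega⟩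
  rw [hset, Finset.card_range]

theorem chainEntry_lt_iff {i j t : ℕ} (hcell : j < c n i) (htn : t ≤ n) :
    chainEntry c n i j < t ↔ j < c t i := by
  obtain ⟨v, hvn, hv1, hv2⟩ := exists_strip hc hcell
  rw [chainEntry_eq hc hcell (by omega) hv1 hv2]
  constructor
  · intro hvt
    exact lt_of_lt_of_le hv2 (chain_le hc (show v + 1 ≤ t by omega) i)
  · intro hjt
    by_contra hvt
    have := chain_le hc (show t ≤ v by omega) i
    omega

theorem chainEntry_lt_n {i j : ℕ} (hcell : j < c n i) : chainEntry c n i j < n :=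
  (chainEntry_lt_iff hc hcell (le_refl n)).mpr hcell

/-- The semistandard Young tableau associated to a chain. -/
def chainSSYT : SemistandardYoungTableau (toYD n (c n) (hc.anti n) (hc.supp n)) where
  entry := chainEntry c n
  row_weak' := by
    intro i j1 j2 hj hcell
    rw [mem_toYD] at hcell
    have hcell1 : j1 < c n i := by omega
    obtain ⟨v2, hv2n, h1, h2⟩ := exists_strip hc hcell
    rw [chainEntry_eq hc hcell (by omega) h1 h2]
    have := (chainEntry_lt_iff hc hcell1 (show v2 + 1 ≤ n by omega)).mpr (by omega)
    omega
  col_strict' := by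
    intro i1 i2 j hi hcell
    rw [mem_toYD] at hcell
    have hcell1 : j < c n i1 := lt_of_lt_of_le hcell (anti_mono (hc.anti n) (by omega))
    obtain ⟨v2, hv2n, h1, h2⟩ := exists_strip hc hcell
    rw [chainEntry_eq hc hcell (by omega) h1 h2]
    rw [chainEntry_lt_iff hc hcell1 (by omega : v2 ≤ n)]
    calc j < c (v2+1) i2 := h2
    _ ≤ c v2 (i2 - 1) := by
        have := chain_strip hc v2 (i2 - 1)
        have harith : i2 - 1 + 1 = i2 := by omega
        rw [harith] at this
        exact this
    _ ≤ c v2 i1 := anti_mono (hc.anti v2) (by omega)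
  zeros' := by
    intro i j hcell
    rw [mem_toYD] at hcell
    rw [chainEntry, if_neg hcell]

theorem chainSSYT_weight {v : ℕ} (hv : v < n) :
    (((toYD n (c n) (hc.anti n) (hc.supp n)).cells).filter
        (fun cl => chainEntry c n cl.1 cl.2 = v)).card
      = w v := by
  have hcol : (toYD n (c n) (hc.anti n) (hc.supp n)).colLen 0 ≤ n := by
    apply colLen_le
    intro i hi
    rw [rowLen_toYD]
    exact hc.supp n i hi
  rw [card_filter_cells hcol (fun i j => chainEntry c n i j = v)]
  have hrow : ∀ i, ((Finset.range ((toYD n (c n) (hc.anti n) (hc.supp n)).rowLen i)).filter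
      (fun j => chainEntry c n i j = v)).card = c (v+1) i - c v i := by
    intro i
    rw [rowLen_toYD]
    have hset : (Finset.range (c n i)).filter (fun j => chainEntry c n i j = v)
        = Finset.Ico (c v i) (c (v+1) i) := by
      ext j
      simp only [Finset.mem_filter, Finset.mem_range, Finset.mem_Ico]
      constructor
      · rintro ⟨hcell, heq⟩
        obtain ⟨v', hv'n, h1, h2⟩ := exists_strip hc hcell
        have := chainEntry_eq hc hcell (by omega) h1 h2
        have : v' = v := by omega
        subst this
        exact ⟨h1, h2⟩
      · rintro ⟨h1, h2⟩
        have hcell : j < c n i := lt_of_lt_of_le h2 (chain_le hc (show v + 1 ≤ n by omega) i)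
        exact ⟨hcell, chainEntry_eq hc hcell (by omega) h1 h2⟩
    rw [hset, Nat.card_Ico]
  have hle : ∀ i, c v i ≤ c (v+1) i := chain_step_le hc v
  have hsum : (∑ i ∈ Finset.range n, (c (v+1) i - c v i)) + ∑ i ∈ Finset.range n, c v i
      = ∑ i ∈ Finset.range n, c (v+1) i := by
    rw [← Finset.sum_add_distrib]
    exact Finset.sum_congr rfl fun i _ => by have := hle i; omega
  have hsz := hc.size v hv
  have hzv : c v n = 0 := hc.supp v n (by omega)
  have hzv1 : c (v+1) n = 0 := hc.supp (v+1) n (by omega)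
  have e1 : sz n (c v) = ∑ i ∈ Finset.range n, c v i := by
    rw [sz, Finset.sum_range_succ, hzv]
    simp
  have e2 : sz n (c (v+1)) = ∑ i ∈ Finset.range n, c (v+1) i := by
    rw [sz, Finset.sum_range_succ, hzv1]
    simp
  calc (∑ i ∈ Finset.range n, ((Finset.range ((toYD n (c n) (hc.anti n) (hc.supp n)).rowLen i)).filter
      (fun j => chainEntry c n i j = v)).card)
      = ∑ i ∈ Finset.range n, (c (v+1) i - c v i) := Finset.sum_congr rfl fun i _ => hrow i
    _ = w v := by omega

theorem chainSSYT_card : (toYD n (c n) (hc.anti n) (hc.supp n)).card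
    = ∑ i ∈ Finset.range n, w i := by
  have hcol : (toYD n (c n) (hc.anti n) (hc.supp n)).colLen 0 ≤ n := by
    apply colLen_le
    intro i hi
    rw [rowLen_toYD]
    exact hc.supp n i hi
  rw [card_cells hcol, ← chain_total hc n (le_refl n), sz, Finset.sum_range_succ]
  have hzn : c n n = 0 := hc.supp n n (le_refl n)
  rw [hzn]
  simp only [Nat.add_zero]
  exact Finset.sum_congr rfl fun i _ => rowLen_toYD i

end ChainLemmas


section TabToChain

variable {μ : YoungDiagram} (T : SemistandardYoungTableau μ) {n : ℕ}

/-- The chain of partitions associated to a tableau: `tabChain T t` is the shape of cells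
with entry `< t`. -/
def tabChain (T : SemistandardYoungTableau μ) : ℕ → ℕ → ℕ := fun t i =>
  ((Finset.range (μ.rowLen i)).filter (fun j => T i j < t)).card

theorem tabChain_iff {t i j : ℕ} :
    j < tabChain T t i ↔ (j < μ.rowLen i ∧ T i j < t) := by
  have hdc : ∀ a b, a ≤ b → b ∈ (Finset.range (μ.rowLen i)).filter (fun j => T i j < t)
      → a ∈ (Finset.range (μ.rowLen i)).filter (fun j => T i j < t) := by
    intro a b hab hb
    simp only [Finset.mem_filter, Finset.mem_range] at *
    obtain ⟨h1, h2⟩ := hb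
    have hcell : (i, b) ∈ μ := YoungDiagram.mem_iff_lt_rowLen.mpr h1
    have := T.row_weak_of_le hab hcell
    exact ⟨by omega, by omega⟩
  have hrange := down_closed_eq_range _ hdc
  constructor
  · intro hj
    have : j ∈ (Finset.range (μ.rowLen i)).filter (fun j => T i j < t) := by
      rw [hrange]
      simpa [tabChain] using hj
    simpa using this
  · intro ⟨h1, h2⟩
    have : j ∈ (Finset.range (μ.rowLen i)).filter (fun j => T i j < t) := by
      simp only [Finset.mem_filter, Finset.mem_range]
      exact ⟨h1, h2⟩
    rw [hrange] at this
    simpa [tabChain] using this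

theorem row_le_entry : ∀ i j, (i, j) ∈ μ → i ≤ T i j := by
  intro i
  induction i with
  | zero => intro j _; omega
  | succ i IH =>
    intro j hmem
    have hup : (i, j) ∈ μ := μ.up_left_mem (by omega) (le_refl j) hmem
    have h1 := IH j hup
    have h2 := T.col_strict (by omega : i < i + 1) hmem
    omega

theorem rowLen_zero_of_colLen {i : ℕ} (h : μ.colLen 0 ≤ i) : μ.rowLen i = 0 := by
  apply nat_eq_of_lt_iff
  intro j
  simp only [Nat.not_lt_zero, iff_false]
  intro hj
  have hmem : (i, 0) ∈ μ := μ.up_left_mem (le_refl i) (Nat.zero_le j)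
    (YoungDiagram.mem_iff_lt_rowLen.mpr hj)
  have := YoungDiagram.mem_iff_lt_colLen.mp hmem
  omega

theorem tabChain_full (hcol : μ.colLen 0 ≤ n) (hent : ∀ cl ∈ μ.cells, T cl.1 cl.2 < n)
    {t : ℕ} (ht : n ≤ t) : ∀ i, tabChain T t i = μ.rowLen i := by
  intro i
  rw [tabChain]
  rw [Finset.filter_true_of_mem, Finset.card_range]
  intro j hj
  have hmem : (i, j) ∈ μ := YoungDiagram.mem_iff_lt_rowLen.mpr (Finset.mem_range.mp hj)
  have h5 : T i j < n := hent (i, j) ((YoungDiagram.mem_cells _).mpr hmem)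
  omega

theorem tabChain_chain (hcol : μ.colLen 0 ≤ n) (hent : ∀ cl ∈ μ.cells, T cl.1 cl.2 < n) :
    Chain n (fun v => (μ.cells.filter (fun cl => T cl.1 cl.2 = v)).card) (tabChain T) := by
  constructor
  · funext i
    simp [tabChain]
  · -- anti
    intro t k
    apply nat_le_of_lt_imp
    intro j hj
    rw [tabChain_iff] at hj ⊢
    obtain ⟨h1, h2⟩ := hj
    have hmem : (k+1, j) ∈ μ := YoungDiagram.mem_iff_lt_rowLen.mpr h1
    have hup : (k, j) ∈ μ := μ.up_left_mem (by omega) (le_refl j) hmem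
    have h3 := T.col_strict (by omega : k < k + 1) hmem
    exact ⟨YoungDiagram.mem_iff_lt_rowLen.mp hup, by omega⟩
  · -- supp
    intro t i hti
    rw [tabChain]
    rw [Finset.filter_false_of_mem, Finset.card_empty]
    intro j hj
    have hmem : (i, j) ∈ μ := YoungDiagram.mem_iff_lt_rowLen.mpr (Finset.mem_range.mp hj)
    have := row_le_entry T i j hmem
    omega
  · -- hs
    intro t _
    constructor
    · intro k
      apply nat_le_of_lt_imp
      intro j hj
      rw [tabChain_iff] at hj ⊢
      exact ⟨hj.1, by omega⟩
    · intro k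
      apply nat_le_of_lt_imp
      intro j hj
      rw [tabChain_iff] at hj ⊢
      obtain ⟨h1, h2⟩ := hj
      have hmem : (k+1, j) ∈ μ := YoungDiagram.mem_iff_lt_rowLen.mpr h1
      have hup : (k, j) ∈ μ := μ.up_left_mem (by omega) (le_refl j) hmem
      have h3 := T.col_strict (by omega : k < k + 1) hmem
      exact ⟨YoungDiagram.mem_iff_lt_rowLen.mp hup, by omega⟩
  · -- size
    intro v hv
    have hrow : ∀ i, tabChain T (v+1) i
        = tabChain T v i + ((Finset.range (μ.rowLen i)).filter (fun j => T i j = v)).card := by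
      intro i
      rw [tabChain, tabChain]
      have hfilter : (Finset.range (μ.rowLen i)).filter (fun j => T i j < v + 1)
          = ((Finset.range (μ.rowLen i)).filter (fun j => T i j < v))
            ∪ ((Finset.range (μ.rowLen i)).filter (fun j => T i j = v)) := by
        rw [← Finset.filter_or]
        exact Finset.filter_congr fun j _ => by constructor <;> intro h <;> omega
      rw [hfilter, Finset.card_union_of_disjoint]
      rw [Finset.disjoint_filter]
      intro j _ h1 h2
      omega
    have e1 : sz n (tabChain T (v+1)) = sz n (tabChain T v)
        + ∑ i ∈ Finset.range (n+1), ((Finset.range (μ.rowLen i)).filter (fun j => T i j = v)).card := by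
      rw [sz, sz, ← Finset.sum_add_distrib]
      exact Finset.sum_congr rfl fun i _ => hrow i
    rw [e1, card_filter_cells hcol (fun i j => T i j = v)]
    congr 1
    rw [Finset.sum_range_succ]
    have : ((Finset.range (μ.rowLen n)).filter (fun j => T n j = v)).card = 0 := by
      rw [rowLen_zero_of_colLen hcol]
      simp
    omega
  · -- clamp
    intro t ht
    funext i
    rw [tabChain_full T hcol hent ht, tabChain_full T hcol hent (le_refl n)]

end TabToChain


/-! ### round trips between chains and tableaux -/

theorem tabChain_chainSSYT {n : ℕ} {w : ℕ → ℕ} {c : ℕ → ℕ → ℕ} (hc : Chain n w c) :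
    tabChain (chainSSYT hc) = c := by
  funext t i
  show ((Finset.range ((toYD n (c n) (hc.anti n) (hc.supp n)).rowLen i)).filter
    (fun j => chainEntry c n i j < t)).card = c t i
  rw [rowLen_toYD]
  rcases le_or_gt t n with ht | ht
  · have hset : (Finset.range (c n i)).filter (fun j => chainEntry c n i j < t)
        = Finset.range (c t i) := by
      ext j
      simp only [Finset.mem_filter, Finset.mem_range]
      constructor
      · rintro ⟨hcell, hlt⟩
        exact (chainEntry_lt_iff hc hcell ht).mp hlt
      · intro hj
        have hcell : j < c n i := lt_of_lt_of_le hj (chain_le hc ht i)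
        exact ⟨hcell, (chainEntry_lt_iff hc hcell ht).mpr hj⟩
    rw [hset, Finset.card_range]
  · have hset : (Finset.range (c n i)).filter (fun j => chainEntry c n i j < t)
        = Finset.range (c n i) := by
      apply Finset.filter_true_of_mem
      intro j hj
      have hcell := Finset.mem_range.mp hj
      have := chainEntry_lt_n hc hcell
      omega
    rw [hset, Finset.card_range, hc.clamp t (by omega)]

theorem toYD_congr {n : ℕ} {f g : ℕ → ℕ} (h : f = g) {hf hg hsf hsg} :
    toYD n f hf hsf = toYD n g hg hsg := by subst h; rfl

/-- Transport an SSYT along an equality of shapes. -/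
def castSSYT {μ ν : YoungDiagram} (h : μ = ν) (T : SemistandardYoungTableau μ) :
    SemistandardYoungTableau ν := h ▸ T

theorem castSSYT_coe {μ ν : YoungDiagram} (h : μ = ν) (T : SemistandardYoungTableau μ) :
    ∀ i j, (castSSYT h T) i j = T i j := by subst h; intro i j; rfl

theorem tabChain_castSSYT {μ ν : YoungDiagram} (h : μ = ν) (T : SemistandardYoungTableau μ) :
    tabChain (castSSYT h T) = tabChain T := by subst h; rfl

section RTB

variable {μ : YoungDiagram} (T : SemistandardYoungTableau μ) {n : ℕ}
variable (hcol : μ.colLen 0 ≤ n) (hent : ∀ cl ∈ μ.cells, T cl.1 cl.2 < n)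
include hcol hent

theorem toYD_tabChain {hf hsf} : toYD n (tabChain T n) hf hsf = μ := by
  apply YoungDiagram.ext
  ext ⟨i, j⟩
  rw [show ((i,j) ∈ (toYD n (tabChain T n) hf hsf).cells) ↔ ((i,j) ∈ toYD n (tabChain T n) hf hsf)
    from Iff.rfl, mem_toYD, tabChain_full T hcol hent (le_refl n) i]
  rw [show ((i,j) ∈ μ.cells) ↔ ((i,j) ∈ μ) from Iff.rfl, YoungDiagram.mem_iff_lt_rowLen]

theorem chainEntry_tabChain : ∀ i j, chainEntry (tabChain T) n i j = T i j := by
  intro i j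
  by_cases hcell : (i, j) ∈ μ
  · have hrl : j < μ.rowLen i := YoungDiagram.mem_iff_lt_rowLen.mp hcell
    have hcn : j < tabChain T n i := by
      rw [tabChain_full T hcol hent (le_refl n) i]; exact hrl
    have hv : T i j < n := hent (i, j) ((YoungDiagram.mem_cells _).mpr hcell)
    apply chainEntry_eq (tabChain_chain T hcol hent) hcn (by omega)
    · -- tabChain T (T i j) i ≤ j
      by_contra hlt
      have := (tabChain_iff T).mp (by omega : j < tabChain T (T i j) i)
      omega
    · -- j < tabChain T (T i j + 1) i
      exact (tabChain_iff T).mpr ⟨hrl, by omega⟩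
  · have hrl : ¬ j < μ.rowLen i := fun h => hcell (YoungDiagram.mem_iff_lt_rowLen.mpr h)
    have hcn : ¬ j < tabChain T n i := by
      rw [tabChain_full T hcol hent (le_refl n) i]; exact hrl
    rw [chainEntry, if_neg hcn, T.zeros hcell]

end RTB

theorem chain_congr_w {n : ℕ} {w w' : ℕ → ℕ} {c : ℕ → ℕ → ℕ} (hc : Chain n w c)
    (h : ∀ i, i < n → w i = w' i) : Chain n w' c where
  zero := hc.zero
  anti := hc.anti
  supp := hc.supp
  hs := hc.hs
  size := fun i hi => by rw [← h i hi]; exact hc.size i hi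
  clamp := hc.clamp

theorem sigma_pair_eq {D E : YoungDiagram} (h : D = E)
    (S1 T1 : SemistandardYoungTableau D) (S2 T2 : SemistandardYoungTableau E)
    (hS : ∀ i j, S1 i j = S2 i j) (hT : ∀ i j, T1 i j = T2 i j) :
    (⟨D, (S1, T1)⟩ : Σ ν : YoungDiagram,
        SemistandardYoungTableau ν × SemistandardYoungTableau ν) = ⟨E, (S2, T2)⟩ := by
  subst h
  rw [SemistandardYoungTableau.ext hS, SemistandardYoungTableau.ext hT]

theorem sum_ext {n : ℕ} (w : Fin n → ℕ) :
    ∑ i ∈ Finset.range n, ext n w i = ∑ i, w i := by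
  rw [← Fin.sum_univ_eq_sum_range (fun i => ext n w i) n]
  exact Finset.sum_congr rfl fun i _ => by simp [ext, i.isLt]




/-! ### the equivalence between chain pairs and SSYT pairs -/

/-- The second tableau, transported to the shape built from the first chain. -/
def chainSSYT2 {n : ℕ} {w w' : ℕ → ℕ} {c d : ℕ → ℕ → ℕ}
    (hc : Chain n w c) (hd : Chain n w' d) (hcd : c n = d n) :
    SemistandardYoungTableau (toYD n (c n) (hc.anti n) (hc.supp n)) where
  entry := chainEntry d n
  row_weak' := by
    intro i j1 j2 hj hcell
    have h1 := mem_toYD.mp hcell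
    rw [hcd] at h1
    exact (chainSSYT hd).row_weak' hj (mem_toYD.mpr h1)
  col_strict' := by
    intro i1 i2 j hi hcell
    have h1 := mem_toYD.mp hcell
    rw [hcd] at h1
    exact (chainSSYT hd).col_strict' hi (mem_toYD.mpr h1)
  zeros' := by
    intro i j hcell
    rw [mem_toYD] at hcell
    rw [hcd] at hcell
    exact (chainSSYT hd).zeros' (by rw [mem_toYD]; exact hcell)

theorem chainSSYT2_weight {n : ℕ} {w w' : ℕ → ℕ} {c d : ℕ → ℕ → ℕ}
    (hc : Chain n w c) (hd : Chain n w' d) (hcd : c n = d n) {v : ℕ} (hv : v < n) :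
    (((toYD n (c n) (hc.anti n) (hc.supp n)).cells).filter
        (fun cl => chainEntry d n cl.1 cl.2 = v)).card = w' v := by
  have hD : toYD n (c n) (hc.anti n) (hc.supp n) = toYD n (d n) (hd.anti n) (hd.supp n) :=
    toYD_congr hcd
  rw [hD]
  exact chainSSYT_weight hd hv

theorem chainSSYT2_lt {n : ℕ} {w w' : ℕ → ℕ} {c d : ℕ → ℕ → ℕ}
    (hc : Chain n w c) (hd : Chain n w' d) (hcd : c n = d n) {i j : ℕ}
    (hcell : (i, j) ∈ toYD n (c n) (hc.anti n) (hc.supp n)) :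
    chainEntry d n i j < n := by
  have h1 := mem_toYD.mp hcell
  rw [hcd] at h1
  exact chainEntry_lt_n hd h1

theorem pair_props (n r : ℕ) (lam mu : Fin n → ℕ)
    (hlam : ∑ i, lam i = r) (c d : ℕ → ℕ → ℕ)
    (hc : Chain n (ext n lam) c) (hd : Chain n (ext n mu) d) (hcd : c n = d n) :
    (toYD n (c n) (hc.anti n) (hc.supp n)).card = r ∧
    (toYD n (c n) (hc.anti n) (hc.supp n)).colLen 0 ≤ n ∧
    (∀ cl ∈ (toYD n (c n) (hc.anti n) (hc.supp n)).cells,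
      (chainSSYT hc) cl.1 cl.2 < n) ∧
    (∀ cl ∈ (toYD n (c n) (hc.anti n) (hc.supp n)).cells,
      (chainSSYT2 hc hd hcd) cl.1 cl.2 < n) ∧
    (∀ v : Fin n, ((toYD n (c n) (hc.anti n) (hc.supp n)).cells.filter
        fun cl => (chainSSYT hc) cl.1 cl.2 = (v : ℕ)).card = lam v) ∧
    (∀ v : Fin n, ((toYD n (c n) (hc.anti n) (hc.supp n)).cells.filter
        fun cl => (chainSSYT2 hc hd hcd) cl.1 cl.2 = (v : ℕ)).card = mu v) := by
  refine ⟨?_, ?_, ?_, ?_, ?_, ?_⟩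
  · rw [chainSSYT_card hc, sum_ext, hlam]
  · apply colLen_le
    intro i hi
    rw [rowLen_toYD]
    exact hc.supp n i hi
  · rintro ⟨i, j⟩ hcl
    exact chainEntry_lt_n hc (mem_toYD.mp hcl)
  · rintro ⟨i, j⟩ hcl
    exact chainSSYT2_lt hc hd hcd hcl
  · intro v
    have h := chainSSYT_weight hc (v.isLt)
    rw [show ext n lam ↑v = lam v by simp [ext, v.isLt]] at h
    exact h
  · intro v
    have h := chainSSYT2_weight hc hd hcd (v := (v : ℕ)) (v.isLt)
    rw [show ext n mu ↑v = mu v by simp [ext, v.isLt]] at h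
    exact h

def chainSSYTPairEquiv (n r : ℕ) (lam mu : Fin n → ℕ)
    (hlam : ∑ i, lam i = r) (hmu : ∑ i, mu i = r) :
    {cd : (ℕ → ℕ → ℕ) × (ℕ → ℕ → ℕ) //
        Chain n (ext n lam) cd.1 ∧ Chain n (ext n mu) cd.2 ∧ cd.1 n = cd.2 n} ≃
    {p : Σ ν : YoungDiagram, SemistandardYoungTableau ν × SemistandardYoungTableau ν //
        p.1.card = r ∧ p.1.colLen 0 ≤ n ∧
        (∀ c ∈ p.1.cells, p.2.1 c.1 c.2 < n) ∧
        (∀ c ∈ p.1.cells, p.2.2 c.1 c.2 < n) ∧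
        (∀ v : Fin n, (p.1.cells.filter fun c => p.2.1 c.1 c.2 = (v : ℕ)).card = lam v) ∧
        (∀ v : Fin n, (p.1.cells.filter fun c => p.2.2 c.1 c.2 = (v : ℕ)).card = mu v)} where
  toFun := fun q =>
    ⟨⟨toYD n (q.1.1 n) (q.2.1.anti n) (q.2.1.supp n),
      (chainSSYT q.2.1, chainSSYT2 q.2.1 q.2.2.1 q.2.2.2)⟩,
      pair_props n r lam mu hlam q.1.1 q.1.2 q.2.1 q.2.2.1 q.2.2.2⟩
  invFun := fun p =>
    ⟨(tabChain p.1.2.1, tabChain p.1.2.2),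
      chain_congr_w (tabChain_chain p.1.2.1 p.2.2.1 p.2.2.2.1) (fun i hi => by
        have h := p.2.2.2.2.2.1 ⟨i, hi⟩
        simpa [ext, hi] using h),
      chain_congr_w (tabChain_chain p.1.2.2 p.2.2.1 p.2.2.2.2.1) (fun i hi => by
        have h := p.2.2.2.2.2.2 ⟨i, hi⟩
        simpa [ext, hi] using h),
      by
        funext i
        show tabChain p.1.2.1 n i = tabChain p.1.2.2 n i
        rw [tabChain_full p.1.2.1 p.2.2.1 p.2.2.2.1 (le_refl n) i,
          tabChain_full p.1.2.2 p.2.2.1 p.2.2.2.2.1 (le_refl n) i]⟩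
  left_inv := fun q => by
    obtain ⟨⟨c, d⟩, hc, hd, hcd⟩ := q
    apply Subtype.ext
    show (tabChain (chainSSYT hc), tabChain (chainSSYT2 hc hd hcd)) = (c, d)
    refine Prod.ext (tabChain_chainSSYT hc) ?_
    show tabChain (chainSSYT2 hc hd hcd) = d
    have hD : toYD n (c n) (hc.anti n) (hc.supp n) = toYD n (d n) (hd.anti n) (hd.supp n) :=
      toYD_congr hcd
    have hcast : chainSSYT2 hc hd hcd = castSSYT hD.symm (chainSSYT hd) := by
      apply SemistandardYoungTableau.ext
      intro i j
      rw [castSSYT_coe]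
      rfl
    rw [hcast, tabChain_castSSYT]
    exact tabChain_chainSSYT hd
  right_inv := fun p => by
    obtain ⟨⟨ν, S, Tt⟩, hcard, hcol, hS, hT, hwS, hwT⟩ := p
    apply Subtype.ext
    apply sigma_pair_eq (toYD_tabChain S hcol hS)
    · intro i j
      exact chainEntry_tabChain S hcol hS i j
    · intro i j
      exact chainEntry_tabChain Tt hcol hT i j

end RSK6

open scoped BigOperators

theorem card_matrices_eq_card_ssyt_pairs (n r : ℕ)
    (lam mu : Fin n → ℕ) (hlam : ∑ i, lam i = r) (hmu : ∑ i, mu i = r) :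
    Nat.card {A : Matrix (Fin n) (Fin n) ℕ //
        (∀ i, ∑ j, A i j = lam i) ∧ (∀ j, ∑ i, A i j = mu j)}
      = Nat.card {p : Σ ν : YoungDiagram,
            SemistandardYoungTableau ν × SemistandardYoungTableau ν //
          p.1.card = r ∧ p.1.colLen 0 ≤ n ∧
          (∀ c ∈ p.1.cells, p.2.1 c.1 c.2 < n) ∧
          (∀ c ∈ p.1.cells, p.2.2 c.1 c.2 < n) ∧
          (∀ v : Fin n,
            (p.1.cells.filter fun c => p.2.1 c.1 c.2 = (v : ℕ)).card = lam v) ∧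
          (∀ v : Fin n,
            (p.1.cells.filter fun c => p.2.2 c.1 c.2 = (v : ℕ)).card = mu v)} := by
  exact Nat.card_congr ((RSK6.matChainEquiv n lam mu).trans
    (RSK6.chainSSYTPairEquiv n r lam mu hlam hmu))
end

section
/- For n ≥ r, End_{GL_n(K)}(E^{⊗r}) ≅ KΣ_r, where GL_n(K) acts diagonally on E^{⊗r} and Σ_r acts by place permutations (classical Schur–Weyl duality statement on the endomorphism algebra). -/
set_option synthInstance.maxHeartbeats 1000000
set_option maxHeartbeats 1600000


/-!
STATEMENT 10: For `n ≥ r`, `End_{GL_n(K)}(E^{⊗r}) ≅ K Σ_r` (classical Schur–Weyl duality),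
where `GL_n(K)` acts diagonally on `E^{⊗r}` and `Σ_r` acts by place permutations; the
isomorphism is induced by the place permutation action, i.e. the canonical algebra map
`K Σ_r → End_{GL_n}(E^{⊗r})` is an isomorphism when `n ≥ r`.

We model `E^{⊗r}` as `(Fin r → Fin n) → K`; the diagonal action of a matrix `g` is the
linear map with matrix `(i,j) ↦ ∏_k g_{i_k j_k}` in the standard basis, and
`End_{GL_n}(E^{⊗r})` is the centralizer of the `GL_n(K)`-action inside `End_K(E^{⊗r})`.
-/

open scoped BigOperators

namespace SchurPaper

variable (K : Type*) [Field K] (n r : ℕ)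

namespace SW

open Polynomial

variable {K n r}

lemma placePerm_apply (σ : Equiv.Perm (Fin r)) (x : TSp K n r) (i : Fin r → Fin n) :
    placePerm K n r σ x i = x (i ∘ σ) := rfl

lemma glAct_apply (g : Matrix (Fin n) (Fin n) K) (x : TSp K n r) (i : Fin r → Fin n) :
    glAct K n r g x i = ∑ j : Fin r → Fin n, (∏ k, g (i k) (j k)) * x j := by
  simp [glAct, Matrix.toLin'_apply, Matrix.mulVec, dotProduct]

lemma glAct_comm_placePerm (g : Matrix (Fin n) (Fin n) K) (σ : Equiv.Perm (Fin r)) :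
    glAct K n r g * placePerm K n r σ = placePerm K n r σ * glAct K n r g := by
  refine LinearMap.ext fun x => funext fun i => ?_
  simp only [Module.End.mul_apply, glAct_apply, placePerm_apply]
  refine Fintype.sum_equiv (Equiv.arrowCongr σ.symm (Equiv.refl (Fin n))) _ _ fun j => ?_
  simp only [Equiv.arrowCongr_apply, Equiv.refl_symm, Equiv.coe_refl, Equiv.symm_symm]
  rw [← Equiv.prod_comp σ (fun k => g (i k) (j k))]
  congr 1

def placePermHom : Equiv.Perm (Fin r) →* Module.End K (TSp K n r) where
  toFun := placePerm K n r
  map_one' := rfl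
  map_mul' _ _ := rfl

noncomputable def Phi : MonoidAlgebra K (Equiv.Perm (Fin r)) →ₐ[K] Module.End K (TSp K n r) :=
  MonoidAlgebra.lift K _ _ placePermHom

lemma Phi_apply (a : MonoidAlgebra K (Equiv.Perm (Fin r))) (x : TSp K n r) (i : Fin r → Fin n) :
    Phi a x i = ∑ σ : Equiv.Perm (Fin r), a.coeff σ * x (i ∘ σ) := by
  rw [Phi, MonoidAlgebra.lift_apply, Finsupp.sum_fintype]
  · simp only [LinearMap.coe_sum, Finset.sum_apply, LinearMap.smul_apply]
    simp [placePermHom, placePerm_apply, smul_eq_mul, MonoidHom.coe_mk, OneHom.coe_mk]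
    rfl
  · intro; simp

def iota (hnr : r ≤ n) : Fin r → Fin n := Fin.castLE hnr

lemma iota_inj (hnr : r ≤ n) : Function.Injective (iota hnr) := Fin.castLE_injective hnr

lemma Phi_injective (hnr : r ≤ n) :
    Function.Injective (Phi : MonoidAlgebra K (Equiv.Perm (Fin r)) →ₐ[K] Module.End K (TSp K n r)) := by
  rw [injective_iff_map_eq_zero]
  intro a ha
  ext τ
  have h : Phi a (Pi.single (iota hnr) 1) (iota hnr ∘ ⇑τ⁻¹) = 0 := by rw [ha]; rfl
  rw [Phi_apply] at h
  have key : ∀ σ : Equiv.Perm (Fin r),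
      a.coeff σ * (Pi.single (iota hnr) 1 : TSp K n r) ((iota hnr ∘ ⇑τ⁻¹) ∘ ⇑σ)
        = if σ = τ then a.coeff σ else 0 := by
    intro σ
    rw [Pi.single_apply]
    have hiff : ((iota hnr ∘ ⇑τ⁻¹) ∘ ⇑σ = iota hnr) ↔ σ = τ := by
      constructor
      · intro h'
        have h2 : ∀ k, τ⁻¹ (σ k) = k := fun k => iota_inj hnr (congrFun h' k)
        refine Equiv.ext fun k => ?_
        have := h2 k
        rwa [Equiv.Perm.inv_eq_iff_eq] at this
      · rintro rfl; funext k; simp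
    by_cases hστ : σ = τ
    · rw [if_pos (hiff.mpr hστ), if_pos hστ, mul_one]
    · rw [if_neg (fun hc => hστ (hiff.mp hc)), mul_zero, if_neg hστ]
  rw [Finset.sum_congr rfl (fun σ _ => key σ),
    Finset.sum_ite_eq' Finset.univ τ (fun σ => a.coeff σ)] at h
  simpa using h

def gmat (g : Matrix (Fin n) (Fin n) K) : Matrix (Fin r → Fin n) (Fin r → Fin n) K :=
  Matrix.of fun i j => ∏ k, g (i k) (j k)

lemma glAct_eq (g : Matrix (Fin n) (Fin n) K) :
    glAct K n r g = Matrix.toLin' (gmat g) := rfl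

lemma comm_gmat_of_comm (T : Module.End K (TSp K n r)) (g : Matrix (Fin n) (Fin n) K)
    (h : glAct K n r g * T = T * glAct K n r g) :
    gmat g * LinearMap.toMatrix' T = LinearMap.toMatrix' T * gmat g := by
  have := congrArg LinearMap.toMatrix' h
  rwa [Module.End.mul_eq_comp, Module.End.mul_eq_comp, LinearMap.toMatrix'_comp,
    LinearMap.toMatrix'_comp, glAct_eq, LinearMap.toMatrix'_toLin'] at this

lemma comm_all [Infinite K] (T : Module.End K (TSp K n r))
    (hT : T ∈ Subalgebra.centralizer K
      (Set.range fun g : GL (Fin n) K => glAct K n r (g : Matrix (Fin n) (Fin n) K)))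
    (g : Matrix (Fin n) (Fin n) K) : glAct K n r g * T = T * glAct K n r g := by
  classical
  set Tm := LinearMap.toMatrix' T with hTm
  have hinv : ∀ u : GL (Fin n) K, gmat (u : Matrix (Fin n) (Fin n) K) * Tm
      = Tm * gmat (u : Matrix (Fin n) (Fin n) K) := by
    intro u
    exact comm_gmat_of_comm T _ ((Subalgebra.mem_centralizer_iff K).mp hT _ ⟨u, rfl⟩)
  have hmat : gmat g * Tm = Tm * gmat g := by
    ext i l
    set G : Matrix (Fin n) (Fin n) (Polynomial K) := Matrix.charmatrix (-g) with hG
    have hGeval : ∀ (t : K) a b, Polynomial.eval t (G a b)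
        = (g + t • (1 : Matrix (Fin n) (Fin n) K)) a b := by
      intro t a b
      by_cases hab : a = b <;>
        simp [hG, Matrix.charmatrix_apply, Matrix.diagonal_apply, Matrix.one_apply,
          Matrix.add_apply, Matrix.smul_apply, hab, smul_eq_mul] <;> ring
    set p : Polynomial K := (∑ j : Fin r → Fin n, (∏ k, G (i k) (j k)) * Polynomial.C (Tm j l))
        - ∑ j : Fin r → Fin n, Polynomial.C (Tm i j) * ∏ k, G (j k) (l k) with hp
    have hpeval : ∀ t : K, Polynomial.eval t p
        = (∑ j : Fin r → Fin n,
            (∏ k, (g + t • (1 : Matrix (Fin n) (Fin n) K)) (i k) (j k)) * Tm j l)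
          - ∑ j : Fin r → Fin n,
            Tm i j * ∏ k, (g + t • (1 : Matrix (Fin n) (Fin n) K)) (j k) (l k) := by
      intro t
      simp only [hp, Polynomial.eval_sub, Polynomial.eval_finset_sum, Polynomial.eval_mul,
        Polynomial.eval_prod, Polynomial.eval_C, hGeval]
    have hdet : ∀ t : K, Polynomial.eval t (Matrix.charpoly (-g))
        = (g + t • (1 : Matrix (Fin n) (Fin n) K)).det := by
      intro t
      rw [Matrix.charpoly, show (Matrix.charmatrix (-g)).det = G.det from rfl]
      have h2 := RingHom.map_det (Polynomial.evalRingHom t) G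
      rw [show (Polynomial.evalRingHom t) G.det = Polynomial.eval t G.det from rfl] at h2
      rw [h2]
      congr 1
      ext a b
      exact hGeval t a b
    have hproots : {t : K | p.IsRoot t}.Infinite := by
      have hfin : {t : K | (Matrix.charpoly (-g)).IsRoot t}.Finite :=
        Polynomial.finite_setOf_isRoot (Matrix.charpoly_monic (-g)).ne_zero
      refine Set.Infinite.mono ?_ hfin.infinite_compl
      intro t ht
      simp only [Set.mem_compl_iff, Set.mem_setOf_eq, Polynomial.IsRoot] at ht ⊢
      have hdt : (g + t • (1 : Matrix (Fin n) (Fin n) K)).det ≠ 0 := by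
        rw [← hdet]; exact ht
      set u : GL (Fin n) K := Matrix.GeneralLinearGroup.mkOfDetNeZero _ hdt with hu
      have hcu := hinv u
      have hcoe : (u : Matrix (Fin n) (Fin n) K) = g + t • 1 := rfl
      rw [hcoe] at hcu
      have hent := Matrix.ext_iff.mpr hcu i l
      rw [Matrix.mul_apply, Matrix.mul_apply] at hent
      simp only [gmat, Matrix.of_apply] at hent
      rw [hpeval t, hent, sub_self]
    have hp0 : p = 0 := Polynomial.eq_zero_of_infinite_isRoot p hproots
    have h00 := hpeval 0
    rw [hp0] at h00
    simp only [Polynomial.eval_zero, zero_smul, add_zero] at h00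
    rw [Matrix.mul_apply, Matrix.mul_apply]
    simp only [gmat, Matrix.of_apply]
    exact (sub_eq_zero.mp h00.symm)
  have := congrArg Matrix.toLin' hmat
  rwa [Matrix.toLin'_mul, Matrix.toLin'_mul, hTm, Matrix.toLin'_toMatrix',
    ← Module.End.mul_eq_comp, ← Module.End.mul_eq_comp, ← glAct_eq] at this

lemma diag_rel (T : Module.End K (TSp K n r))
    (hC : ∀ g : Matrix (Fin n) (Fin n) K, glAct K n r g * T = T * glAct K n r g)
    (d : Fin n → K) (i l : Fin r → Fin n) :
    (∏ k, d (i k)) * LinearMap.toMatrix' T i l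
      = LinearMap.toMatrix' T i l * ∏ k, d (l k) := by
  classical
  have H : ∀ i' j : Fin r → Fin n,
      (∏ k, if i' k = j k then d (i' k) else 0) = if i' = j then ∏ k, d (i' k) else 0 := by
    intro i' j
    by_cases h : i' = j
    · subst h; simp
    · obtain ⟨k, hk⟩ := Function.ne_iff.mp h
      rw [if_neg h]
      exact Finset.prod_eq_zero (Finset.mem_univ k) (if_neg hk)
  have hent := Matrix.ext_iff.mpr (comm_gmat_of_comm T (Matrix.diagonal d) (hC _)) i l
  rw [Matrix.mul_apply, Matrix.mul_apply] at hent
  simp only [gmat, Matrix.of_apply, Matrix.diagonal_apply] at hent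
  simp only [H] at hent
  simp only [ite_mul, mul_ite, zero_mul, mul_zero] at hent
  rw [Finset.sum_ite_eq, Finset.sum_ite_eq'] at hent
  simpa using hent

lemma pow_eq_self_imp_one [Infinite K] {m : ℕ} (h : ∀ t : K, t ^ m = t) : m = 1 := by
  by_contra hm
  have hroot : {t : K | ((X : K[X]) ^ m - X).IsRoot t} = Set.univ := by
    ext t; simp [Polynomial.IsRoot, h t]
  have h0 : ((X : K[X]) ^ m - X) = 0 := by
    apply Polynomial.eq_zero_of_infinite_isRoot
    rw [hroot]; exact Set.infinite_univ
  have hx : ((X : K[X]) ^ m) = X := sub_eq_zero.mp h0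
  have := congrArg Polynomial.natDegree hx
  rw [Polynomial.natDegree_X_pow, Polynomial.natDegree_X] at this
  exact hm this

lemma exists_perm [Infinite K] (hnr : r ≤ n) (T : Module.End K (TSp K n r))
    (hC : ∀ g : Matrix (Fin n) (Fin n) K, glAct K n r g * T = T * glAct K n r g)
    (i : Fin r → Fin n) (hne : LinearMap.toMatrix' T i (iota hnr) ≠ 0) :
    ∃ σ : Equiv.Perm (Fin r), i = iota hnr ∘ ⇑σ := by
  classical
  have P : ∀ d : Fin n → K, (∏ k, d (i k)) = ∏ k, d (iota hnr k) := by
    intro d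
    have h := diag_rel T hC d i (iota hnr)
    rw [mul_comm (LinearMap.toMatrix' T i (iota hnr))] at h
    exact mul_right_cancel₀ hne h
  have step1 : ∀ k, ((i k : ℕ) < r) := by
    intro k
    by_contra hk
    have h := P (fun b => if (b : ℕ) < r then 1 else 0)
    have hR : (∏ k', if ((iota hnr k' : ℕ) < r) then (1:K) else 0) = 1 := by
      refine Finset.prod_eq_one fun k' _ => ?_
      rw [if_pos]
      simpa [iota] using k'.isLt
    have hL : (∏ k', if ((i k' : ℕ) < r) then (1:K) else 0) = 0 :=
      Finset.prod_eq_zero (Finset.mem_univ k) (if_neg hk)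
    rw [hL, hR] at h
    exact zero_ne_one h
  have step2 : Function.Injective i := by
    intro k k' he
    set a := i k with ha
    set m := (Finset.univ.filter fun k'' => i k'' = a).card with hmdef
    have hpow : ∀ t : K, t ^ m = t := by
      intro t
      have h := P (fun b => if b = a then t else 1)
      have hL : (∏ k'', if i k'' = a then t else 1) = t ^ m := by
        rw [Finset.prod_ite, Finset.prod_const, Finset.prod_const_one, mul_one]
      have hk0 : iota hnr ⟨(a : ℕ), step1 k⟩ = a := by
        apply Fin.ext; simp [iota]
      have hcond : ∀ k'' : Fin r, (iota hnr k'' = a) ↔ k'' = ⟨(a : ℕ), step1 k⟩ := by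
        intro k''
        constructor
        · intro hh; exact iota_inj hnr (by rw [hk0, hh])
        · rintro rfl; exact hk0
      have hR : (∏ k'', if iota hnr k'' = a then t else 1) = t := by
        calc (∏ k'', if iota hnr k'' = a then t else 1)
            = ∏ k'', if k'' = (⟨(a : ℕ), step1 k⟩ : Fin r) then t else 1 :=
              Finset.prod_congr rfl fun k'' _ => if_congr (hcond k'') rfl rfl
          _ = t := by rw [Finset.prod_ite_eq' Finset.univ _ (fun _ => t)]; simp
      rw [hL, hR] at h
      exact h
    have hm1 : m = 1 := pow_eq_self_imp_one hpow
    have hk : k ∈ Finset.univ.filter fun k'' => i k'' = a := by simp [ha]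
    have hk' : k' ∈ Finset.univ.filter fun k'' => i k'' = a := by simp [← he, ha]
    exact Finset.card_le_one.mp hm1.le k hk k' hk'
  let j' : Fin r → Fin r := fun k => ⟨(i k : ℕ), step1 k⟩
  have hj'inj : Function.Injective j' := by
    intro k k' h
    have hval : (j' k).val = (j' k').val := congrArg Fin.val h
    exact step2 (Fin.ext hval)
  have hbij : Function.Bijective j' := (Finite.injective_iff_bijective).mp hj'inj
  refine ⟨Equiv.ofBijective j' hbij, ?_⟩
  funext k
  apply Fin.ext
  simp [iota, Equiv.ofBijective, j']


def eb (j : Fin r → Fin n) : TSp K n r := fun j' => if j' = j then 1 else 0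

lemma T_apply_eb (T : Module.End K (TSp K n r)) (j i : Fin r → Fin n) :
    T (eb j) i = LinearMap.toMatrix' T i j := by
  have hebj : (eb j : TSp K n r) = Pi.single j 1 := by
    funext j'; rw [Pi.single_apply]; rfl
  rw [LinearMap.toMatrix'_apply, hebj]

lemma glAct_comm_Phi (g : Matrix (Fin n) (Fin n) K) (a : MonoidAlgebra K (Equiv.Perm (Fin r))) :
    glAct K n r g * Phi a = Phi a * glAct K n r g := by
  rw [Phi, MonoidAlgebra.lift_apply, Finsupp.mul_sum, Finsupp.sum_mul]
  refine Finsupp.sum_congr fun σ _ => ?_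
  rw [mul_smul_comm, smul_mul_assoc]
  exact congrArg (fun L => a.coeff σ • L) (glAct_comm_placePerm g σ)

lemma Phi_surjective [Infinite K] (hnr : r ≤ n) (T : Module.End K (TSp K n r))
    (hT : T ∈ Subalgebra.centralizer K
      (Set.range fun g : GL (Fin n) K => glAct K n r (g : Matrix (Fin n) (Fin n) K))) :
    ∃ a : MonoidAlgebra K (Equiv.Perm (Fin r)), Phi a = T := by
  classical
  have hC := comm_all T hT
  set a : MonoidAlgebra K (Equiv.Perm (Fin r)) :=
    MonoidAlgebra.ofCoeff (Finsupp.equivFunOnFinite.symm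
      (fun σ : Equiv.Perm (Fin r) => LinearMap.toMatrix' T (iota hnr ∘ ⇑σ⁻¹) (iota hnr))) with hadef
  have ha : ∀ σ, a.coeff σ = LinearMap.toMatrix' T (iota hnr ∘ ⇑σ⁻¹) (iota hnr) := by
    intro σ; rw [hadef]; rfl
  refine ⟨a, ?_⟩
  set S : Module.End K (TSp K n r) := Phi a - T with hSdef
  have hcomm : ∀ g : Matrix (Fin n) (Fin n) K,
      glAct K n r g * S = S * glAct K n r g := by
    intro g; rw [hSdef, mul_sub, sub_mul, hC g, glAct_comm_Phi]
  have hS0 : S (eb (iota hnr)) = 0 := by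
    rw [hSdef, LinearMap.sub_apply, sub_eq_zero]
    funext i
    rw [Phi_apply, T_apply_eb]
    by_cases hcase : ∃ τ : Equiv.Perm (Fin r), i = iota hnr ∘ ⇑τ
    · obtain ⟨τ, rfl⟩ := hcase
      have hcnd : ∀ σ : Equiv.Perm (Fin r),
          ((iota hnr ∘ ⇑τ) ∘ ⇑σ = iota hnr) ↔ σ = τ⁻¹ := by
        intro σ
        constructor
        · intro h'
          refine Equiv.ext fun k => ?_
          have h2 : τ (σ k) = k := iota_inj hnr (congrFun h' k)
          rw [Equiv.Perm.eq_inv_iff_eq]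
          exact h2
        · rintro rfl; funext k; simp
      have hterm : ∀ σ : Equiv.Perm (Fin r),
          a.coeff σ * eb (iota hnr) ((iota hnr ∘ ⇑τ) ∘ ⇑σ) = if σ = τ⁻¹ then a.coeff σ else 0 := by
        intro σ
        show a.coeff σ * (if (iota hnr ∘ ⇑τ) ∘ ⇑σ = iota hnr then (1:K) else 0) = _
        by_cases hσ : σ = τ⁻¹
        · rw [if_pos ((hcnd σ).mpr hσ), mul_one, if_pos hσ]
        · rw [if_neg (fun hc => hσ ((hcnd σ).mp hc)), mul_zero, if_neg hσ]
      rw [Finset.sum_congr rfl (fun σ _ => hterm σ),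
        Finset.sum_ite_eq' Finset.univ τ⁻¹ (fun σ => a.coeff σ)]
      simp only [Finset.mem_univ, if_true]
      rw [ha τ⁻¹, inv_inv]
    · have hTz : LinearMap.toMatrix' T i (iota hnr) = 0 := by
        by_contra hne
        exact hcase (exists_perm hnr T hC i hne)
      rw [hTz]
      refine Finset.sum_eq_zero fun σ _ => ?_
      have : (eb (iota hnr) : TSp K n r) (i ∘ ⇑σ) = 0 := by
        show (if i ∘ ⇑σ = iota hnr then (1:K) else 0) = 0
        rw [if_neg]
        intro hc
        refine hcase ⟨σ⁻¹, funext fun k => ?_⟩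
        have := congrFun hc (σ⁻¹ k)
        simpa using this
      rw [this, mul_zero]
  have hSall : ∀ j : Fin r → Fin n, S (eb j) = 0 := by
    intro j
    set gj : Matrix (Fin n) (Fin n) K :=
      Matrix.of fun b c =>
        if h : (c : ℕ) < r then (if b = j ⟨(c : ℕ), h⟩ then 1 else 0) else 0 with hgjdef
    have hgj : glAct K n r gj (eb (iota hnr)) = eb j := by
      funext i
      rw [glAct_apply]
      have hterm : ∀ j' : Fin r → Fin n,
          (∏ k, gj (i k) (j' k)) * eb (iota hnr) j'
            = if j' = iota hnr then (∏ k, gj (i k) (iota hnr k)) else 0 := by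
        intro j'
        show (∏ k, gj (i k) (j' k)) * (if j' = iota hnr then (1:K) else 0) = _
        by_cases hj' : j' = iota hnr
        · subst hj'; rw [if_pos rfl, if_pos rfl, mul_one]
        · rw [if_neg hj', if_neg hj', mul_zero]
      rw [Finset.sum_congr rfl (fun j' _ => hterm j'),
        Finset.sum_ite_eq' Finset.univ (iota hnr) _]
      simp only [Finset.mem_univ, if_true]
      have hfact : ∀ k : Fin r, gj (i k) (iota hnr k) = if i k = j k then (1:K) else 0 := by
        intro k
        have hlt : ((iota hnr k : ℕ) < r) := by simpa [iota] using k.isLt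
        have hidx : (⟨(iota hnr k : ℕ), hlt⟩ : Fin r) = k := by
          apply Fin.ext; simp [iota]
        simp only [hgjdef, Matrix.of_apply, dif_pos hlt, hidx]
      rw [Finset.prod_congr rfl (fun k _ => hfact k)]
      show _ = (if i = j then (1:K) else 0)
      by_cases hij : i = j
      · subst hij; rw [if_pos rfl]; exact Finset.prod_eq_one fun k _ => if_pos rfl
      · obtain ⟨k, hk⟩ := Function.ne_iff.mp hij
        rw [if_neg hij]
        exact Finset.prod_eq_zero (Finset.mem_univ k) (if_neg hk)
    have h1 := congrArg (fun L : Module.End K (TSp K n r) => L (eb (iota hnr))) (hcomm gj)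

    simp only [Module.End.mul_apply] at h1
    rw [hS0, map_zero, hgj] at h1
    exact h1.symm
  have hS : S = 0 := by
    refine Module.Basis.ext (Pi.basisFun K (Fin r → Fin n)) fun j => ?_
    rw [Pi.basisFun_apply]
    have hebj : (Pi.single j 1 : TSp K n r) = eb j := by
      funext j'; rw [Pi.single_apply]; rfl
    rw [hebj, hSall j, LinearMap.zero_apply]
  rw [hSdef] at hS
  exact sub_eq_zero.mp hS


lemma placePerm_mem (σ : Equiv.Perm (Fin r)) :
    placePerm K n r σ ∈ Subalgebra.centralizer K
      (Set.range fun g : GL (Fin n) K => glAct K n r (g : Matrix (Fin n) (Fin n) K)) := by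
  rw [Subalgebra.mem_centralizer_iff]
  rintro _ ⟨g, rfl⟩
  exact glAct_comm_placePerm _ σ

noncomputable def PhiC : MonoidAlgebra K (Equiv.Perm (Fin r)) →ₐ[K]
    ↥(Subalgebra.centralizer K
      (Set.range fun g : GL (Fin n) K => glAct K n r (g : Matrix (Fin n) (Fin n) K))) :=
  MonoidAlgebra.lift K _ _
    { toFun := fun σ => ⟨placePerm K n r σ, placePerm_mem σ⟩
      map_one' := Subtype.ext rfl
      map_mul' := fun σ τ => Subtype.ext rfl }

lemma PhiC_coe (a : MonoidAlgebra K (Equiv.Perm (Fin r))) :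
    ((PhiC a : ↥(Subalgebra.centralizer K
      (Set.range fun g : GL (Fin n) K => glAct K n r (g : Matrix (Fin n) (Fin n) K)))) :
        Module.End K (TSp K n r)) = Phi a := by
  have h : (Subalgebra.centralizer K
      (Set.range fun g : GL (Fin n) K =>
        glAct K n r (g : Matrix (Fin n) (Fin n) K))).val.comp PhiC
      = (Phi : MonoidAlgebra K (Equiv.Perm (Fin r)) →ₐ[K] Module.End K (TSp K n r)) := by
    refine MonoidAlgebra.algHom_ext (fun σ => ?_) (Subsingleton.elim _ _)
    simp only [AlgHom.coe_comp, Function.comp_apply, PhiC, Phi, MonoidAlgebra.lift_of,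
      MonoidAlgebra.lift_single, one_smul]
    rfl
  exact DFunLike.congr_fun h a

lemma PhiC_of (σ : Equiv.Perm (Fin r)) :
    ((PhiC (MonoidAlgebra.of K (Equiv.Perm (Fin r)) σ) :
      ↥(Subalgebra.centralizer K
        (Set.range fun g : GL (Fin n) K => glAct K n r (g : Matrix (Fin n) (Fin n) K)))) :
          Module.End K (TSp K n r)) = placePerm K n r σ := by
  rw [PhiC_coe, Phi, MonoidAlgebra.lift_of]
  rfl

end SW

theorem schur_weyl_duality [Infinite K] (hnr : r ≤ n) :
    ∃ e : MonoidAlgebra K (Equiv.Perm (Fin r)) ≃ₐ[K]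
        ↥(Subalgebra.centralizer K
            (Set.range fun g : GL (Fin n) K =>
              glAct K n r (g : Matrix (Fin n) (Fin n) K))),
      ∀ σ : Equiv.Perm (Fin r),
        ((e (MonoidAlgebra.of K (Equiv.Perm (Fin r)) σ) : Module.End K (TSp K n r))
          = placePerm K n r σ) := by
  have hinj : Function.Injective (SW.PhiC (K := K) (n := n) (r := r)) := by
    intro x y hxy
    apply SW.Phi_injective hnr
    have := congrArg (Subtype.val) hxy
    rwa [SW.PhiC_coe, SW.PhiC_coe] at this
  have hsurj : Function.Surjective (SW.PhiC (K := K) (n := n) (r := r)) := by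
    rintro ⟨T, hT⟩
    obtain ⟨a, haT⟩ := SW.Phi_surjective hnr T hT
    exact ⟨a, Subtype.ext (by rw [SW.PhiC_coe, haT])⟩
  refine ⟨AlgEquiv.ofBijective SW.PhiC ⟨hinj, hsurj⟩, fun σ => ?_⟩
  have h1 : (AlgEquiv.ofBijective SW.PhiC ⟨hinj, hsurj⟩) (MonoidAlgebra.of K (Equiv.Perm (Fin r)) σ)
      = SW.PhiC (MonoidAlgebra.of K (Equiv.Perm (Fin r)) σ) := rfl
  rw [h1, SW.PhiC_of]

end SchurPaper
end
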